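/- arXiv:math/0111287 — 3 statements merged into one kernel-verified Lean document; each statement's English description precedes it below -/
import Mathlib

section
/- Let A and Y be topological spaces, n ≥ 0, and let A × Sⁿ → Y be a continuous map. Let Z be the pushout of Y ← A × Sⁿ → A × D^{n+1} (along the inclusion Sⁿ ⊆ D^{n+1}). Then the canonical map Y → Z is injective, and the inclusion Y ⊆ Z is relatively T₁. -/
noncomputable section

universe u

open scoped Topology
open CategoryTheory CategoryTheory.Limits Opposite Simplicial

section TopPushout

/-- The pushout `A ∪_P B` of a span `A ← P → B` in the category of all topological
spaces, constructed as a quotient of the disjoint union `A ⊕ B`. -/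
def TopPushout {P A B : Type u} [TopologicalSpace P] [TopologicalSpace A]
    [TopologicalSpace B] (f : P → A) (g : P → B) : Type u :=
  Quot (fun x y : A ⊕ B => ∃ p : P, x = Sum.inl (f p) ∧ y = Sum.inr (g p))

instance {P A B : Type u} [TopologicalSpace P] [TopologicalSpace A] [TopologicalSpace B]
    (f : P → A) (g : P → B) : TopologicalSpace (TopPushout f g) :=
  inferInstanceAs (TopologicalSpace (Quot _))

/-- The first structure map `A → A ∪_P B` of a pushout. -/
def TopPushout.inl {P A B : Type u} [TopologicalSpace P] [TopologicalSpace A]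
    [TopologicalSpace B] (f : P → A) (g : P → B) : C(A, TopPushout f g) :=
  ⟨fun a => Quot.mk _ (Sum.inl a), continuous_quot_mk.comp continuous_inl⟩

/-- The second structure map `B → A ∪_P B` of a pushout. -/
def TopPushout.inr {P A B : Type u} [TopologicalSpace P] [TopologicalSpace A]
    [TopologicalSpace B] (f : P → A) (g : P → B) : C(B, TopPushout f g) :=
  ⟨fun b => Quot.mk _ (Sum.inr b), continuous_quot_mk.comp continuous_inr⟩

end TopPushout

section TopPushoutMap

variable {P A B P' A' B' : Type u} [TopologicalSpace P] [TopologicalSpace A]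
  [TopologicalSpace B] [TopologicalSpace P'] [TopologicalSpace A'] [TopologicalSpace B']
  {f : P → A} {g : P → B} {f' : P' → A'} {g' : P' → B'}

/-- The map of pushouts induced by a map of spans. -/
def TopPushout.map (hA : C(A, A')) (hB : C(B, B')) (hP : P → P')
    (c1 : ∀ p, hA (f p) = f' (hP p)) (c2 : ∀ p, hB (g p) = g' (hP p)) :
    C(TopPushout f g, TopPushout f' g') where
  toFun := Quot.lift (fun x => Quot.mk _ (Sum.map hA hB x))
    (by
      rintro u v ⟨p, rfl, rfl⟩
      apply Quot.sound
      exact ⟨hP p, by simp [c1 p], by simp [c2 p]⟩)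
  continuous_toFun := continuous_quot_lift _
    (continuous_quot_mk.comp (hA.continuous.sumMap hB.continuous))

end TopPushoutMap

/-- A map `ι : Y → Z` (thought of as an inclusion of topological spaces) is *relatively T₁*
if for every open subset `U` of `Y` and every point `z` of `Z` not in the image of `U`,
there is an open set `W` of `Z` containing the image of `U` and avoiding `z`. -/
def IsRelativelyT1 {Y Z : Type*} [TopologicalSpace Y] [TopologicalSpace Z]
    (i : Y → Z) : Prop :=
  ∀ U : Set Y, IsOpen U → ∀ z : Z, z ∉ i '' U →
    ∃ W : Set Z, IsOpen W ∧ i '' U ⊆ W ∧ z ∉ W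

section PushoutRelT1

variable (n : ℕ)

/-- The closed unit disc `D^{n+1}` in `ℝ^{n+1}`. -/
def Disc : Type := Metric.closedBall (0 : EuclideanSpace ℝ (Fin n)) 1

instance : TopologicalSpace (Disc n) :=
  inferInstanceAs (TopologicalSpace (Metric.closedBall (0 : EuclideanSpace ℝ (Fin n)) 1))

/-- The unit sphere `Sⁿ` in `ℝ^{n+1}`, the boundary of `D^{n+1}`. -/
def Sphere : Type := Metric.sphere (0 : EuclideanSpace ℝ (Fin n)) 1

instance : TopologicalSpace (Sphere n) :=
  inferInstanceAs (TopologicalSpace (Metric.sphere (0 : EuclideanSpace ℝ (Fin n)) 1))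

/-- The inclusion `Sⁿ ⊆ D^{n+1}` of the boundary sphere in the closed disc. -/
def sphereInclusion : C(Sphere n, Disc n) :=
  ⟨Set.inclusion Metric.sphere_subset_closedBall, continuous_inclusion _⟩

section AuxLemmas

variable {A Y : Type} [TopologicalSpace A] [TopologicalSpace Y] {m : ℕ}

private lemma norm_sphere_val (s : Sphere m) : ‖s.1‖ = 1 :=
  mem_sphere_zero_iff_norm.mp s.2

private lemma norm_disc_val (x : Disc m) : ‖x.1‖ ≤ 1 :=
  mem_closedBall_zero_iff.mp x.2

/-- Key construction: for every open `U ⊆ Y` and `0 < r < 1`, there is an open set `W`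
of the pushout whose trace on `Y` is `U` and whose trace on `A × D` is the
"radial thickening" of `α ⁻¹' U` beyond radius `r`. -/
private lemma exists_good_open (α : C(A × Sphere m, Y)) (U : Set Y) (hU : IsOpen U)
    (r : ℝ) (h0 : 0 < r) (h1 : r < 1) :
    ∃ W : Set (TopPushout (⇑α)
        (fun q : A × Sphere m => ((q.1, sphereInclusion m q.2) : A × Disc m))),
      IsOpen W ∧ (∀ y : Y, Quot.mk _ (Sum.inl y) ∈ W ↔ y ∈ U) ∧
      (∀ q : A × Disc m, ‖q.2.1‖ ≤ r → Quot.mk _ (Sum.inr q) ∉ W) ∧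
      (∀ q : A × Disc m, ∀ s : Sphere m, s.1 = ‖q.2.1‖⁻¹ • q.2.1 →
        (Quot.mk _ (Sum.inr q) ∈ W ↔ r < ‖q.2.1‖ ∧ α (q.1, s) ∈ U)) := by
  classical
  set E := EuclideanSpace ℝ (Fin m)
  -- the preimage of U in A × Sphere m is open
  have hB : IsOpen ((⇑α) ⁻¹' U) := hU.preimage α.continuous
  -- the inclusion A × Sphere m → A × E is inducing
  have hind : Topology.IsInducing (Prod.map (id : A → A) (Subtype.val : Sphere m → E)) :=
    Topology.IsInducing.id.prodMap Topology.IsInducing.subtypeVal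
  obtain ⟨T, hT, hTB⟩ := hind.isOpen_iff.mp hB
  -- the thickened open set in A × E
  set S' : Set (A × E) := {q | r < ‖q.2‖} with hS'def
  have hS' : IsOpen S' := isOpen_lt continuous_const (continuous_norm.comp continuous_snd)
  set φ : A × E → A × E := fun q => (q.1, ‖q.2‖⁻¹ • q.2) with hφdef
  have hφ : ContinuousOn φ S' := by
    apply ContinuousOn.prodMk continuousOn_fst
    exact (ContinuousOn.inv₀ (continuousOn_snd.norm)
      (fun q hq => ne_of_gt (lt_trans h0 hq))).smul continuousOn_snd
  set O' : Set (A × E) := S' ∩ φ ⁻¹' T with hO'def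
  have hO' : IsOpen O' := hφ.isOpen_inter_preimage hS' hT
  set O : Set (A × Disc m) := (fun q : A × Disc m => ((q.1, q.2.1) : A × E)) ⁻¹' O'
    with hOdef
  have hO : IsOpen O := by
    apply hO'.preimage
    exact continuous_fst.prodMk (continuous_subtype_val.comp continuous_snd)
  -- membership of a disc point in O
  have hOmem : ∀ q : A × Disc m, q ∈ O ↔ r < ‖q.2.1‖ ∧ (q.1, ‖q.2.1‖⁻¹ • q.2.1) ∈ T :=
    fun q => Iff.rfl
  -- membership of T via B for sphere points
  have hTmem : ∀ a : A, ∀ s : Sphere m, ((a, s.1) : A × E) ∈ T ↔ α (a, s) ∈ U := by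
    intro a s
    have : ((a, s) : A × Sphere m) ∈ Prod.map (id : A → A) (Subtype.val : Sphere m → E) ⁻¹' T
        ↔ ((a, s) : A × Sphere m) ∈ (⇑α) ⁻¹' U := by rw [hTB]; exact Iff.rfl
    exact this
  -- compatibility of U and O along the attaching map
  have hcompat : ∀ p : A × Sphere m,
      (α p ∈ U) = (((p.1, sphereInclusion m p.2) : A × Disc m) ∈ O) := by
    intro p
    apply propext
    have hn : ‖(sphereInclusion m p.2).1‖ = 1 := norm_sphere_val p.2
    rw [hOmem]
    rw [hn]
    constructor
    · intro h
      refine ⟨h1, ?_⟩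
      rw [inv_one, one_smul]; exact (hTmem p.1 p.2).mpr h
    · rintro ⟨-, h⟩
      exact (hTmem p.1 p.2).mp (by rw [inv_one, one_smul] at h; exact h)
  -- the candidate open set
  refine ⟨{z | Quot.lift (Sum.elim (· ∈ U) (· ∈ O))
      (by rintro x y ⟨p, rfl, rfl⟩; exact hcompat p) z}, ?_, ?_, ?_, ?_⟩
  · refine isQuotientMap_quot_mk.isOpen_preimage.mp ?_
    rw [isOpen_sum_iff]
    exact ⟨hU, hO⟩
  · intro y; exact Iff.rfl
  · intro q hle hmem
    have : q ∈ O := hmem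
    exact absurd ((hOmem q).mp this).1 (not_lt.mpr hle)
  · intro q s hs
    show q ∈ O ↔ r < ‖q.2.1‖ ∧ α (q.1, s) ∈ U
    rw [hOmem]
    constructor
    · rintro ⟨hr, hmem⟩
      refine ⟨hr, (hTmem q.1 s).mp ?_⟩
      rwa [hs]
    · rintro ⟨hr, hmem⟩
      refine ⟨hr, ?_⟩
      rw [← hs]
      exact (hTmem q.1 s).mpr hmem

/-- A set-theoretic invariant used to prove injectivity: send boundary points of the
disc part to their images in `Y`. -/
private def retr (α : C(A × Sphere m, Y)) : Y ⊕ (A × Disc m) → Y ⊕ (A × Disc m) := fun x =>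
  match x with
  | .inl y => .inl y
  | .inr q =>
      if h : ‖q.2.1‖ = 1 then
        .inl (α (q.1, ⟨q.2.1, mem_sphere_zero_iff_norm.mpr h⟩))
      else .inr q

private lemma retr_rel (α : C(A × Sphere m, Y)) :
    ∀ x y : Y ⊕ (A × Disc m),
      (∃ p : A × Sphere m, x = Sum.inl (α p) ∧
        y = Sum.inr ((p.1, sphereInclusion m p.2) : A × Disc m)) → retr α x = retr α y := by
  rintro x y ⟨p, rfl, rfl⟩
  have hn : ‖(sphereInclusion m p.2).1‖ = 1 := norm_sphere_val p.2
  simp only [retr, dif_pos hn]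
  exact congrArg (fun q => Sum.inl (α q)) (Prod.ext rfl (Subtype.ext rfl))

end AuxLemmas

/-- If `Z` is obtained from `Y` by attaching `A × D^{n+1}` along a map `A × Sⁿ → Y`, then
the canonical map `Y → Z` is injective and the inclusion `Y ⊆ Z` is relatively `T₁`. -/
theorem pushout_inl_injective_isRelativelyT1
    {A Y : Type} [TopologicalSpace A] [TopologicalSpace Y]
    (α : C(A × Sphere (n + 1), Y)) :
    Function.Injective
        (TopPushout.inl (⇑α)
          (fun q : A × Sphere (n + 1) => ((q.1, sphereInclusion (n + 1) q.2) : A × Disc (n + 1)))) ∧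
      IsRelativelyT1
        (TopPushout.inl (⇑α)
          (fun q : A × Sphere (n + 1) => ((q.1, sphereInclusion (n + 1) q.2) : A × Disc (n + 1)))) := by
  classical
  constructor
  · -- injectivity
    intro y y' h
    exact Sum.inl.inj (congrArg (Quot.lift (retr α) (retr_rel α)) h)
  · -- relative T₁
    intro U hU z hz
    obtain ⟨x, rfl⟩ := Quot.exists_rep z
    match x with
    | .inl y₀ =>
      obtain ⟨W, hWopen, hW1, hW2, hW3⟩ := exists_good_open α U hU (1/2)
        (by norm_num) (by norm_num)
      refine ⟨W, hWopen, ?_, ?_⟩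
      · rintro _ ⟨y, hy, rfl⟩
        exact (hW1 y).mpr hy
      · intro hmem
        have hy₀ : y₀ ∈ U := (hW1 y₀).mp hmem
        exact hz ⟨y₀, hy₀, rfl⟩
    | .inr q₀ =>
      have hle : ‖q₀.2.1‖ ≤ 1 := norm_disc_val q₀.2
      rcases eq_or_lt_of_le hle with heq | hlt
      · -- boundary point: z is identified with a point of Y outside U
        set s₀ : Sphere (n + 1) := ⟨q₀.2.1, mem_sphere_zero_iff_norm.mpr heq⟩ with hs₀
        have hq₀ : q₀ = ((q₀.1, sphereInclusion (n + 1) s₀) : A × Disc (n + 1)) :=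
          Prod.ext rfl (Subtype.ext rfl)
        have hzeq : Quot.mk
            (fun x y : Y ⊕ (A × Disc (n + 1)) => ∃ p : A × Sphere (n + 1),
              x = Sum.inl (α p) ∧
                y = Sum.inr ((p.1, sphereInclusion (n + 1) p.2) : A × Disc (n + 1)))
            (Sum.inl (α (q₀.1, s₀))) = Quot.mk _ (Sum.inr q₀) :=
          Quot.sound ⟨(q₀.1, s₀), rfl, congrArg Sum.inr hq₀⟩
        have hαn : α (q₀.1, s₀) ∉ U := fun hin => hz ⟨α (q₀.1, s₀), hin, hzeq⟩
        obtain ⟨W, hWopen, hW1, hW2, hW3⟩ := exists_good_open α U hU (1/2)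
          (by norm_num) (by norm_num)
        refine ⟨W, hWopen, ?_, ?_⟩
        · rintro _ ⟨y, hy, rfl⟩
          exact (hW1 y).mpr hy
        · intro hmem
          have hs : s₀.1 = ‖q₀.2.1‖⁻¹ • q₀.2.1 := by
            rw [heq, inv_one, one_smul]
          exact hαn ((hW3 q₀ s₀ hs).mp hmem).2
      · -- interior point: separate by radius
        have hnn : (0:ℝ) ≤ ‖q₀.2.1‖ := norm_nonneg _
        obtain ⟨W, hWopen, hW1, hW2, hW3⟩ := exists_good_open α U hU ((1 + ‖q₀.2.1‖)/2)
          (by linarith) (by linarith)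
        refine ⟨W, hWopen, ?_, ?_⟩
        · rintro _ ⟨y, hy, rfl⟩
          exact (hW1 y).mpr hy
        · exact hW2 q₀ (by linarith)

end PushoutRelT1


end
end

section
/- Let Y₁ ⊆ Y₂ ⊆ Y₃ ⊆ ⋯ be a sequence of relatively T₁ inclusions of topological spaces, and let K be a compact space. Then every continuous map f : K → colim_k Y_k factors through some Y_k. -/
noncomputable section

universe u

open scoped Topology
open CategoryTheory CategoryTheory.Limits Opposite Simplicial

section SeqColim

variable {Y : ℕ → Type u} [∀ k, TopologicalSpace (Y k)]

/-- The colimit (increasing union) of a sequence `Y₁ ⊆ Y₂ ⊆ ⋯` of inclusions, equipped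
with the final topology. -/
def SeqColim (e : ∀ k, C(Y k, Y (k + 1))) : Type u :=
  Quot (fun x y : Σ k, Y k => ∃ (k : ℕ) (a : Y k), x = ⟨k, a⟩ ∧ y = ⟨k + 1, e k a⟩)

instance (e : ∀ k, C(Y k, Y (k + 1))) : TopologicalSpace (SeqColim e) :=
  inferInstanceAs (TopologicalSpace (Quot _))

/-- The canonical map `Y k → colim Y` into the sequential colimit. -/
def SeqColim.ι (e : ∀ k, C(Y k, Y (k + 1))) (k : ℕ) : C(Y k, SeqColim e) :=
  ⟨fun a => Quot.mk _ ⟨k, a⟩, continuous_quot_mk.comp continuous_sigmaMk⟩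

namespace SeqColimAux

/-- The defining relation of the sequential colimit. -/
def SRel (e : ∀ k, C(Y k, Y (k + 1))) : (Σ k, Y k) → (Σ k, Y k) → Prop :=
  fun x y => ∃ (k : ℕ) (a : Y k), x = ⟨k, a⟩ ∧ y = ⟨k + 1, e k a⟩

variable (e : ∀ k, C(Y k, Y (k + 1)))

/-- Iterated transition maps. -/
def tr (k : ℕ) : ∀ p, Y k → Y (k + p) := fun p a => match p, a with
  | 0, a => a
  | p+1, a => e (k+p) (tr k p a)

lemma continuous_tr (k p : ℕ) : Continuous (tr e k p) := by
  induction p with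
  | zero => exact continuous_id
  | succ p ih => exact (e (k+p)).continuous.comp ih

/-- Shift a point of the sigma type `p` stages up. -/
def D (x : Σ k, Y k) (p : ℕ) : Σ k, Y k := ⟨x.1 + p, tr e x.1 p x.2⟩

lemma D_succ (x : Σ k, Y k) (p : ℕ) : D e x (p+1) = D e (D e x p) 1 := rfl

lemma D_comp (x : Σ k, Y k) (p q : ℕ) : D e (D e x p) q = D e x (p + q) := by
  induction q with
  | zero => rfl
  | succ q ih =>
      calc D e (D e x p) (q+1) = D e (D e (D e x p) q) 1 := rfl
        _ = D e (D e x (p+q)) 1 := by rw [ih]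
        _ = D e x (p+(q+1)) := rfl

lemma mk_D (x : Σ k, Y k) (p : ℕ) :
    (Quot.mk (SRel e) (D e x p)) = Quot.mk (SRel e) x := by
  induction p with
  | zero => rfl
  | succ p ih =>
      rw [D_succ]
      have h1 : (Quot.mk (SRel e) (D e (D e x p) 1)) = Quot.mk (SRel e) (D e x p) :=
        (Quot.sound ⟨(D e x p).1, (D e x p).2, rfl, rfl⟩).symm
      rw [h1, ih]

lemma merge_of_eqvGen {x y : Σ k, Y k} (h : Relation.EqvGen (SRel e) x y) :
    ∃ p q, D e x p = D e y q := by
  induction h with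
  | rel x y hr => obtain ⟨k, a, rfl, rfl⟩ := hr; exact ⟨1, 0, rfl⟩
  | refl x => exact ⟨0, 0, rfl⟩
  | symm x y _ ih => obtain ⟨p, q, h⟩ := ih; exact ⟨q, p, h.symm⟩
  | trans x y z _ _ ih1 ih2 =>
      obtain ⟨p, q, h1⟩ := ih1
      obtain ⟨p', q', h2⟩ := ih2
      refine ⟨p + p', q' + q, ?_⟩
      calc D e x (p + p') = D e (D e x p) p' := (D_comp e x p p').symm
        _ = D e (D e y q) p' := by rw [h1]
        _ = D e y (q + p') := D_comp e y q p'
        _ = D e y (p' + q) := by rw [Nat.add_comm]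
        _ = D e (D e y p') q := (D_comp e y p' q).symm
        _ = D e (D e z q') q := by rw [h2]
        _ = D e z (q' + q) := D_comp e z q' q

lemma merge_of_mk_eq {x y : Σ k, Y k}
    (h : (Quot.mk (SRel e) x) = Quot.mk (SRel e) y) :
    ∃ p q, D e x p = D e y q :=
  merge_of_eqvGen e (Quot.eqvGen_exact h)

lemma ι_eq_mk (k : ℕ) (a : Y k) :
    SeqColim.ι e k a = (Quot.mk (SRel e) ⟨k, a⟩ : SeqColim e) := rfl

lemma isOpen_seqColim_iff (s : Set (SeqColim e)) :
    IsOpen s ↔ ∀ m, IsOpen (Set.ofPred fun (a : Y m) => SeqColim.ι e m a ∈ s) := by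
  constructor
  · intro hs m; exact hs.preimage (SeqColim.ι e m).continuous
  · intro h
    have : IsOpen ((Quot.mk (SRel e)) ⁻¹' s) := by rw [isOpen_sigma_iff]; exact h
    exact isOpen_coinduced.mpr this

lemma tr_injective (hemb : ∀ k, Topology.IsEmbedding (e k)) (k p : ℕ) :
    Function.Injective (tr e k p) := by
  induction p with
  | zero => exact fun a b h => h
  | succ p ih => exact fun a b h => ih ((hemb (k+p)).injective h)

lemma ι_injective (hemb : ∀ k, Topology.IsEmbedding (e k)) (k : ℕ) :
    Function.Injective (SeqColim.ι e k) := by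
  intro a b h
  rw [ι_eq_mk, ι_eq_mk] at h
  obtain ⟨p, q, hpq⟩ := merge_of_mk_eq e h
  have h1 : k + p = k + q := congrArg Sigma.fst hpq
  obtain rfl : p = q := Nat.add_left_cancel h1
  exact tr_injective e hemb k p (sigma_mk_injective hpq)

lemma range_ι_mono {k l : ℕ} (h : k ≤ l) :
    Set.range (SeqColim.ι e k) ⊆ Set.range (SeqColim.ι e l) := by
  obtain ⟨d, rfl⟩ := Nat.exists_eq_add_of_le h
  rintro _ ⟨a, rfl⟩
  exact ⟨tr e k d a, mk_D e ⟨k, a⟩ d⟩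

/-- Tower membership set in the sigma type. -/
def SB (k : ℕ) (B : ∀ n, Set (Y (k + n))) : Set (Σ j, Y j) :=
  {x | ∃ n b, b ∈ B n ∧ x = ⟨k + n, b⟩}

lemma D_mem_SB {k : ℕ} {B : ∀ n, Set (Y (k + n))}
    (hmono : ∀ n (b : Y (k + n)), b ∈ B n → e (k + n) b ∈ B (n + 1))
    {x : Σ j, Y j} (hx : x ∈ SB k B) (q : ℕ) : D e x q ∈ SB k B := by
  induction q with
  | zero => exact hx
  | succ q ih =>
      obtain ⟨n, b, hb, hxq⟩ := ih
      rw [D_succ, hxq]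
      exact ⟨n + 1, e (k + n) b, hmono n b hb, rfl⟩

/-- The open subset of the colimit generated by a compatible tower of opens. -/
def WSet (k : ℕ) (B : ∀ n, Set (Y (k + n))) : Set (SeqColim e) :=
  {z | ∃ x ∈ SB k B, z = Quot.mk (SRel e) x}

lemma mem_WSet_iff {k : ℕ} {B : ∀ n, Set (Y (k + n))}
    (hmono : ∀ n (b : Y (k + n)), b ∈ B n → e (k + n) b ∈ B (n + 1))
    (m : ℕ) (a : Y m) :
    SeqColim.ι e m a ∈ WSet e k B ↔ ∃ p, D e ⟨m, a⟩ p ∈ SB k B := by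
  constructor
  · rintro ⟨x, hx, hq⟩
    rw [ι_eq_mk] at hq
    obtain ⟨p, q, hd⟩ := merge_of_mk_eq e hq
    exact ⟨p, hd ▸ D_mem_SB e hmono hx q⟩
  · rintro ⟨p, hp⟩
    exact ⟨D e ⟨m, a⟩ p, hp, ((mk_D e ⟨m, a⟩ p).symm : _)⟩

lemma isOpen_slice {k : ℕ} {B : ∀ n, Set (Y (k + n))}
    (hBopen : ∀ n, IsOpen (B n)) (j : ℕ) :
    IsOpen (Set.ofPred fun (c : Y j) => (⟨j, c⟩ : Σ j, Y j) ∈ SB k B) := by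
  have heq : (Set.ofPred fun (c : Y j) => (⟨j, c⟩ : Σ j, Y j) ∈ SB k B)
      = ⋃ n, (Set.ofPred fun (c : Y j) => ∃ b ∈ B n, (⟨j, c⟩ : Σ j, Y j) = ⟨k + n, b⟩) := by
    ext c
    simp only [Set.mem_setOf_eq, Set.mem_iUnion, SB]
  rw [heq]
  apply isOpen_iUnion
  intro n
  by_cases h : j = k + n
  · subst h
    have : (Set.ofPred fun (c : Y (k + n)) => ∃ b ∈ B n, (⟨k + n, c⟩ : Σ j, Y j) = ⟨k + n, b⟩) = B n := by
      ext c
      simp only [Set.mem_setOf_eq]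
      constructor
      · rintro ⟨b, hb, hcb⟩
        obtain rfl := sigma_mk_injective hcb
        exact hb
      · intro hc; exact ⟨c, hc, rfl⟩
    rw [this]; exact hBopen n
  · have : (Set.ofPred fun (c : Y j) => ∃ b ∈ B n, (⟨j, c⟩ : Σ j, Y j) = ⟨k + n, b⟩) = ∅ := by
      ext c
      simp only [Set.mem_setOf_eq, Set.mem_empty_iff_false, iff_false]
      rintro ⟨b, _, hcb⟩
      exact h (congrArg Sigma.fst hcb)
    rw [this]; exact isOpen_empty

lemma isOpen_WSet {k : ℕ} {B : ∀ n, Set (Y (k + n))}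
    (hBopen : ∀ n, IsOpen (B n))
    (hmono : ∀ n (b : Y (k + n)), b ∈ B n → e (k + n) b ∈ B (n + 1)) :
    IsOpen (WSet e k B) := by
  rw [isOpen_seqColim_iff]
  intro m
  have hset : (Set.ofPred fun (a : Y m) => SeqColim.ι e m a ∈ WSet e k B)
      = ⋃ p, (tr e m p) ⁻¹' (Set.ofPred fun (c : Y (m + p)) => (⟨m + p, c⟩ : Σ j, Y j) ∈ SB k B) := by
    ext a
    simp only [Set.mem_setOf_eq, Set.mem_iUnion, Set.mem_preimage]
    rw [mem_WSet_iff e hmono]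
    rfl
  rw [hset]
  exact isOpen_iUnion fun p => (isOpen_slice hBopen (m + p)).preimage (continuous_tr e m p)

/-! ### The T₁ tower (Part A) -/

/-- For each point `b`, an open set containing `e j '' s` and avoiding `b` whenever possible. -/
lemma exists_sep (hT1 : ∀ j, IsRelativelyT1 (e j)) (j : ℕ)
    (s : Set (Y j)) (hs : IsOpen s) (b : Y (j + 1)) :
    ∃ W : Set (Y (j + 1)), IsOpen W ∧ (e j) '' s ⊆ W ∧ (b ∉ (e j) '' s → b ∉ W) := by
  by_cases h : b ∈ (e j) '' s
  · exact ⟨Set.univ, isOpen_univ, Set.subset_univ _, fun h' => absurd h h'⟩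
  · obtain ⟨W, h1, h2, h3⟩ := hT1 j s hs b h
    exact ⟨W, h1, h2, fun _ => h3⟩

/-- One step of the T₁-tower: shrink to avoid all "bad" points (points of `S`) that do not
come from below. -/
def stepT1 (hT1 : ∀ j, IsRelativelyT1 (e j)) (S : Set (SeqColim e)) (j : ℕ)
    (s : Set (Y j)) (hs : IsOpen s) : Set (Y (j + 1)) :=
  ⋂ b ∈ (Set.ofPred fun (b : Y (j + 1)) => SeqColim.ι e (j + 1) b ∈ S),
    Classical.choose (exists_sep e hT1 j s hs b)

lemma stepT1_isOpen (hT1 : ∀ j, IsRelativelyT1 (e j)) (S : Set (SeqColim e)) (j : ℕ)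
    (s : Set (Y j)) (hs : IsOpen s)
    (hfin : (Set.ofPred fun (b : Y (j + 1)) => SeqColim.ι e (j + 1) b ∈ S).Finite) :
    IsOpen (stepT1 e hT1 S j s hs) :=
  hfin.isOpen_biInter fun b _ => (Classical.choose_spec (exists_sep e hT1 j s hs b)).1

lemma stepT1_mono (hT1 : ∀ j, IsRelativelyT1 (e j)) (S : Set (SeqColim e)) (j : ℕ)
    (s : Set (Y j)) (hs : IsOpen s) :
    (e j) '' s ⊆ stepT1 e hT1 S j s hs := fun _y hy =>
  Set.mem_iInter₂.mpr fun b _ => (Classical.choose_spec (exists_sep e hT1 j s hs b)).2.1 hy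

lemma stepT1_avoid (hT1 : ∀ j, IsRelativelyT1 (e j)) (S : Set (SeqColim e)) (j : ℕ)
    (s : Set (Y j)) (hs : IsOpen s) (b : Y (j + 1))
    (hb : b ∈ stepT1 e hT1 S j s hs) (hbS : SeqColim.ι e (j + 1) b ∈ S) :
    b ∈ (e j) '' s := by
  by_contra h
  exact (Classical.choose_spec (exists_sep e hT1 j s hs b)).2.2 h
    (Set.mem_iInter₂.mp hb b hbS)

/-- The T₁ tower over base stage `k₀`, starting with everything. -/
def BT1 (hT1 : ∀ j, IsRelativelyT1 (e j)) (S : Set (SeqColim e))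
    (hSfin : ∀ j, (Set.ofPred fun (b : Y j) => SeqColim.ι e j b ∈ S).Finite) (k₀ : ℕ) :
    ∀ n, {s : Set (Y (k₀ + n)) // IsOpen s} := fun n => match n with
  | 0 => ⟨Set.univ, isOpen_univ⟩
  | n+1 =>
      ⟨stepT1 e hT1 S (k₀ + n) (BT1 hT1 S hSfin k₀ n).1 (BT1 hT1 S hSfin k₀ n).2,
       stepT1_isOpen e hT1 S (k₀ + n) _ _ (hSfin (k₀ + n + 1))⟩


lemma BT1_invariant (hT1 : ∀ j, IsRelativelyT1 (e j)) (S : Set (SeqColim e))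
    (hSfin : ∀ j, (Set.ofPred fun (b : Y j) => SeqColim.ι e j b ∈ S).Finite) (k₀ : ℕ) :
    ∀ n (b : Y (k₀ + n)), b ∈ (BT1 e hT1 S hSfin k₀ n).1 →
      SeqColim.ι e (k₀ + n) b ∈ S →
      SeqColim.ι e (k₀ + n) b ∈ Set.range (SeqColim.ι e k₀) := by
  intro n
  induction n with
  | zero => intro b _ _; exact ⟨b, rfl⟩
  | succ n ih =>
      intro b hb hbS
      have hbim : b ∈ (e (k₀ + n)) '' (BT1 e hT1 S hSfin k₀ n).1 :=
        stepT1_avoid e hT1 S (k₀ + n) (BT1 e hT1 S hSfin k₀ n).1 (BT1 e hT1 S hSfin k₀ n).2 b hb hbS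
      obtain ⟨b', hb', rfl⟩ := hbim
      have heq : SeqColim.ι e (k₀ + (n + 1)) (e (k₀ + n) b') = SeqColim.ι e (k₀ + n) b' :=
        mk_D e ⟨k₀ + n, b'⟩ 1
      rw [heq] at hbS ⊢
      exact ih b' hb' hbS

/-! ### The embedding tower (Part B) -/

/-- The embedding tower over base stage `k`, extending an open set `U` of `Y k` with exact
preimages. -/
def BEmb (hemb : ∀ j, Topology.IsEmbedding (e j)) (k : ℕ) (U : Set (Y k)) (hU : IsOpen U) :
    ∀ n, {s : Set (Y (k + n)) // IsOpen s} := fun n => match n with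
  | 0 => ⟨U, hU⟩
  | n+1 =>
      ⟨Classical.choose
        ((hemb (k + n)).toIsInducing.isOpen_iff.mp (BEmb hemb k U hU n).2),
       (Classical.choose_spec
        ((hemb (k + n)).toIsInducing.isOpen_iff.mp (BEmb hemb k U hU n).2)).1⟩

lemma BEmb_preim (hemb : ∀ j, Topology.IsEmbedding (e j)) (k : ℕ) (U : Set (Y k))
    (hU : IsOpen U) (n : ℕ) :
    (e (k + n)) ⁻¹' (BEmb e hemb k U hU (n + 1)).1 = (BEmb e hemb k U hU n).1 :=
  (Classical.choose_spec
    ((hemb (k + n)).toIsInducing.isOpen_iff.mp (BEmb e hemb k U hU n).2)).2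

lemma BEmb_back (hemb : ∀ j, Topology.IsEmbedding (e j)) (k : ℕ) (U : Set (Y k))
    (hU : IsOpen U) :
    ∀ p (a : Y k), tr e k p a ∈ (BEmb e hemb k U hU p).1 → a ∈ U := by
  intro p
  induction p with
  | zero => exact fun a h => h
  | succ p ih =>
      intro a h
      have h' : tr e k p a ∈ (e (k + p)) ⁻¹' (BEmb e hemb k U hU (p + 1)).1 := h
      rw [BEmb_preim e hemb k U hU p] at h'
      exact ih a h'

end SeqColimAux

open SeqColimAux in
/-- If `Y₁ ⊆ Y₂ ⊆ ⋯` is a sequence of relatively `T₁` inclusions of topological spaces and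
`K` is a compact space, then every continuous map `K → colim Y` factors through some `Y k`. -/
theorem seqColim_compact_factors
    (e : ∀ k, C(Y k, Y (k + 1)))
    (hemb : ∀ k, Topology.IsEmbedding (e k))
    (hT1 : ∀ k, IsRelativelyT1 (e k))
    {K : Type u} [TopologicalSpace K] [CompactSpace K]
    (f : C(K, SeqColim e)) :
    ∃ (k : ℕ) (g : C(K, Y k)), ∀ x : K, f x = SeqColim.ι e k (g x) := by
  by_cases hcase : ∃ k, ∀ z, f z ∈ Set.range (SeqColim.ι e k)
  · -- the image lies in some stage: factor continuously using the embeddings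
    obtain ⟨k, hk⟩ := hcase
    choose g0 hg0 using hk
    have hgc : Continuous g0 := by
      rw [continuous_def]
      intro U hU
      set B := BEmb e hemb k U hU with hB
      have hpre : ∀ n, (e (k + n)) ⁻¹' (B (n + 1)).1 = (B n).1 :=
        BEmb_preim e hemb k U hU
      have hmono : ∀ n (b : Y (k + n)), b ∈ (B n).1 → e (k + n) b ∈ (B (n + 1)).1 := by
        intro n b hb
        rw [← hpre n] at hb
        exact hb
      have hUeq : g0 ⁻¹' U = f ⁻¹' (WSet e k (fun n => (B n).1)) := by
        ext z
        simp only [Set.mem_preimage]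
        rw [← hg0 z, mem_WSet_iff e hmono]
        constructor
        · intro h
          exact ⟨0, 0, g0 z, h, rfl⟩
        · rintro ⟨p, m, b, hb, hsig⟩
          have h1 : k + p = k + m := congrArg Sigma.fst hsig
          obtain rfl : p = m := Nat.add_left_cancel h1
          obtain rfl : tr e k p (g0 z) = b := sigma_mk_injective hsig
          exact BEmb_back e hemb k U hU p (g0 z) hb
      rw [hUeq]
      exact (isOpen_WSet e (fun n => (B n).2) hmono).preimage f.continuous
    exact ⟨k, ⟨g0, hgc⟩, fun z => (hg0 z).symm⟩
  · -- otherwise derive a contradiction using compactness and relative T₁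
    exfalso
    push_neg at hcase
    choose x hx using hcase
    set S : Set (SeqColim e) := Set.range (fun n => f (x n)) with hS
    have hSfin : ∀ j, (Set.ofPred fun (b : Y j) => SeqColim.ι e j b ∈ S).Finite := by
      intro j
      apply Set.Finite.subset
        (Set.Finite.biUnion (Finset.range j).finite_toSet
          (fun n _ => Set.Subsingleton.finite
            (fun b hb b' hb' => ι_injective e hemb j (hb.trans hb'.symm)
              : Set.Subsingleton (Set.ofPred fun (b : Y j) => SeqColim.ι e j b = f (x n)))))
      intro b hb
      obtain ⟨n, hn⟩ := hb
      have hnj : n < j := by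
        by_contra h
        push_neg at h
        exact hx n (range_ι_mono e h ⟨b, hn.symm⟩)
      exact Set.mem_biUnion (by simpa using hnj) hn.symm
    have hne : (Filter.map x Filter.atTop).NeBot := Filter.map_neBot
    obtain ⟨xstar, hcl⟩ := exists_clusterPt_of_compactSpace (Filter.map x Filter.atTop)
    have htd : Filter.Tendsto f (Filter.map x Filter.atTop)
        (Filter.map (fun n => f (x n)) Filter.atTop) := le_of_eq Filter.map_map
    have hclz : ClusterPt (f xstar) (Filter.map (fun n => f (x n)) Filter.atTop) :=
      hcl.map f.continuous.continuousAt htd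
    obtain ⟨⟨k₀, a₀⟩, ha₀⟩ :
        ∃ y : Σ k, Y k, (Quot.mk (SRel e) y : SeqColim e) = f xstar :=
      Quot.exists_rep _
    set B := BT1 e hT1 S hSfin k₀ with hB
    have hmono : ∀ n (b : Y (k₀ + n)), b ∈ (B n).1 → e (k₀ + n) b ∈ (B (n + 1)).1 :=
      fun n b hb => stepT1_mono e hT1 S (k₀ + n) (B n).1 (B n).2 (Set.mem_image_of_mem _ hb)
    have hWopen : IsOpen (WSet e k₀ (fun n => (B n).1)) :=
      isOpen_WSet e (fun n => (B n).2) hmono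
    have hzW : f xstar ∈ WSet e k₀ (fun n => (B n).1) := by
      rw [← ha₀]
      exact ⟨⟨k₀, a₀⟩, ⟨0, a₀, Set.mem_univ a₀, rfl⟩, rfl⟩
    have hfreq := clusterPt_iff_nonempty.mp hclz (hWopen.mem_nhds hzW)
      (Filter.image_mem_map (Filter.mem_atTop k₀) :
        (fun n => f (x n)) '' {n | k₀ ≤ n} ∈ Filter.map (fun n => f (x n)) Filter.atTop)
    obtain ⟨y, hyW, hyV⟩ := hfreq
    obtain ⟨n, hn, rfl⟩ := hyV
    obtain ⟨x', hx', hq⟩ := hyW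
    obtain ⟨m, b, hb, rfl⟩ := hx'
    have hq' : f (x n) = SeqColim.ι e (k₀ + m) b := hq
    have hbS : SeqColim.ι e (k₀ + m) b ∈ S := ⟨n, hq'⟩
    have hrange := BT1_invariant e hT1 S hSfin k₀ m b hb hbS
    rw [← hq'] at hrange
    exact hx n (range_ι_mono e hn hrange)

end SeqColim

end
end

section
/- Let X_* be a split simplicial space and let K be a compact topological space. Then every continuous map K → |X_*| factors through |Sk_n X_*| for some n. -/
noncomputable section

universe u

open scoped Topology
open CategoryTheory CategoryTheory.Limits Opposite Simplicial

namespace SimplexCategory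

open scoped NNReal

/-- The topological simplex associated to `x : SimplexCategory` (as in the older Mathlib). -/
def toTopObj (x : SimplexCategory) := (setOf fun f : Fin (x.len + 1) → ℝ≥0 => ∑ i, f i = 1 : Set (Fin (x.len + 1) → ℝ≥0))

open Classical in
/-- A morphism in `SimplexCategory` induces a map on the associated topological spaces
(as in the older Mathlib). -/
def toTopMap {x y : SimplexCategory} (f : x ⟶ y) (g : x.toTopObj) : y.toTopObj :=
  ⟨fun i => ∑ j ∈ Finset.univ.filter (f.toOrderHom · = i), g.1 j, by
    show ∑ i, ∑ j ∈ Finset.univ.filter (f.toOrderHom · = i), g.1 j = 1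
    rw [Finset.sum_fiberwise]
    exact g.2⟩

end SimplexCategory

/-- The total space `∐ₙ Wₙ × Δⁿ` from which the geometric realization of a simplicial
space `W` is built. -/
def GeomRealPre (W : SimplicialObject TopCat.{u}) : Type u :=
  Σ n : SimplexCategory, W.obj (op n) × n.toTopObj

instance (W : SimplicialObject TopCat.{u}) : TopologicalSpace (GeomRealPre W) :=
  inferInstanceAs (TopologicalSpace (Σ n : SimplexCategory, W.obj (op n) × n.toTopObj))

/-- The relation `(θ* x, t) ∼ (x, θ_* t)` generating the identifications made in the
geometric realization of a simplicial space. -/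
def GeomRealRel (W : SimplicialObject TopCat.{u}) : GeomRealPre W → GeomRealPre W → Prop :=
  fun p q => ∃ θ : p.1 ⟶ q.1,
    p.2.1 = W.map θ.op q.2.1 ∧ q.2.2 = SimplexCategory.toTopMap θ p.2.2

/-- The geometric realization `|W| = (∐ₙ Wₙ × Δⁿ)/∼` of a simplicial space `W`,
where `(θ* x, t) ∼ (x, θ_* t)` for all morphisms `θ` of the simplex category. -/
def GeomReal (W : SimplicialObject TopCat.{u}) : Type u :=
  Quot (GeomRealRel W)

instance (W : SimplicialObject TopCat.{u}) : TopologicalSpace (GeomReal W) :=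
  inferInstanceAs (TopologicalSpace (Quot (GeomRealRel W)))

/-- The point of the geometric realization determined by a point of `Wₙ × Δⁿ`. -/
def GeomReal.mk (W : SimplicialObject TopCat.{u}) {n : SimplexCategory}
    (x : W.obj (op n)) (t : n.toTopObj) : GeomReal W :=
  Quot.mk _ ⟨n, x, t⟩

/-- The continuous map of geometric realizations induced by a map of simplicial spaces. -/
def GeomReal.map {W V : SimplicialObject TopCat.{u}} (f : W ⟶ V) :
    C(GeomReal W, GeomReal V) where
  toFun := Quot.lift (fun p => GeomReal.mk V (f.app (op p.1) p.2.1) p.2.2)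
    (by
      rintro ⟨m, x, t⟩ ⟨n, y, s⟩ ⟨θ, h1, h2⟩
      dsimp at h1 h2 ⊢
      apply Quot.sound
      refine ⟨θ, ?_, h2⟩
      dsimp
      rw [h1]
      exact ConcreteCategory.congr_hom (f.naturality θ.op) y)
  continuous_toFun := by
    apply continuous_quot_lift
    apply continuous_sigma
    intro n
    have h1 : Continuous fun xt : W.obj (op n) × n.toTopObj =>
        (⟨n, f.app (op n) xt.1, xt.2⟩ : GeomRealPre V) :=
      continuous_sigmaMk.comp ((f.app (op n)).hom.continuous.prodMap continuous_id)
    exact continuous_quot_mk.comp h1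

/-- The continuous map `|W| → X` induced by an augmentation `W ⟶ cX` to the constant
simplicial space at `X`. -/
def GeomReal.toAug {W : SimplicialObject TopCat.{u}} {X : TopCat.{u}}
    (e : W ⟶ (Functor.const _).obj X) : C(GeomReal W, X) where
  toFun := Quot.lift (fun p => e.app (op p.1) p.2.1)
    (by
      rintro ⟨m, x, t⟩ ⟨n, y, s⟩ ⟨θ, h1, h2⟩
      dsimp at h1 ⊢
      rw [h1]
      exact ConcreteCategory.congr_hom (e.naturality θ.op) y)
  continuous_toFun := by
    apply continuous_quot_lift
    apply continuous_sigma
    intro n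
    exact (e.app (op n)).hom.continuous.comp continuous_fst

section Split

open scoped NNReal

variable (W : SimplicialObject TopCat.{0})

/-- The index type for the splitting decomposition in level `k`: surjections `[k] ↠ [n]`
in the simplex category. -/
def SurjFrom (k : SimplexCategoryᵒᵖ) : Type :=
  Σ n : SimplexCategory, { s : k.unop ⟶ n // Function.Surjective s.toOrderHom }

/-- The canonical map `∐_{σ : [k] ↠ [n]} N_n → W_k` determined by a choice of subspaces
`N n ⊆ W n`, sending the copy of `N_n` indexed by the surjection `σ` into `W_k` by the
degeneracy `σ*`. -/
def splitCanonicalMap (N : ∀ n : SimplexCategory, Set (W.obj (op n)))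
    (k : SimplexCategoryᵒᵖ) (q : Σ p : SurjFrom k, ↥(N p.1)) : W.obj k :=
  W.map q.1.2.1.op q.2.1

/-- A simplicial space `W` is *split* (has free degeneracies) with respect to subspaces
`N n ⊆ W n` if in every level `k` the canonical map `∐_{σ : [k] ↠ [n]} N_n → W_k` is a
homeomorphism. -/
def IsSplitting (N : ∀ n : SimplexCategory, Set (W.obj (op n))) : Prop :=
  ∀ k : SimplexCategoryᵒᵖ, IsHomeomorph (splitCanonicalMap W N k)

/-- The subspace of `W_k` of simplices coming from dimension at most `n`: the union of the
images of the maps `W_j → W_k` for `j ≤ n`.  These are the levels of the `n`-skeleton,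
which agrees with `W` in dimensions `≤ n` and consists of the degenerate part of `W`
generated by dimensions `≤ n` above. -/
def SkSet (n : ℕ) (k : SimplexCategoryᵒᵖ) : Set (W.obj k) :=
  { x | ∃ (j : SimplexCategory) (_ : j.len ≤ n) (s : k.unop ⟶ j) (y : W.obj (op j)),
      x = W.map s.op y }

lemma skSet_map (n : ℕ) {k l : SimplexCategoryᵒᵖ} (θ : k ⟶ l) {x : W.obj k}
    (hx : x ∈ SkSet W n k) : W.map θ x ∈ SkSet W n l := by
  obtain ⟨j, hj, s, y, rfl⟩ := hx
  refine ⟨j, hj, θ.unop ≫ s, y, ?_⟩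
  have : (θ.unop ≫ s).op = s.op ≫ θ := rfl
  rw [this, W.map_comp]
  rfl

/-- The `n`-skeleton of a simplicial space `W`, the simplicial subspace of `W` agreeing
with `W` in dimensions `≤ n` and given by the degenerate part of `W` above. -/
def Sk (n : ℕ) : SimplicialObject TopCat.{0} where
  obj k := TopCat.of ↥(SkSet W n k)
  map {k l} θ := TopCat.ofHom ⟨fun x => ⟨W.map θ x.1, skSet_map W n θ x.2⟩,
    Continuous.subtype_mk ((W.map θ).hom.continuous.comp continuous_subtype_val) _⟩
  map_id k := by
    apply TopCat.hom_ext
    apply ContinuousMap.ext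
    rintro ⟨x, hx⟩
    apply Subtype.ext
    show W.map (𝟙 k) x = x
    rw [W.map_id]
    rfl
  map_comp {k l j} θ θ' := by
    apply TopCat.hom_ext
    apply ContinuousMap.ext
    rintro ⟨x, hx⟩
    apply Subtype.ext
    show W.map (θ ≫ θ') x = W.map θ' (W.map θ x)
    rw [W.map_comp]
    rfl

/-- The inclusion of the `n`-skeleton of `W` into `W`. -/
def skInclusion (n : ℕ) : Sk W n ⟶ W where
  app k := TopCat.ofHom ⟨Subtype.val, continuous_subtype_val⟩
  naturality _ _ _ := rfl

lemma skSet_mono (n : ℕ) (k : SimplexCategoryᵒᵖ) : SkSet W n k ⊆ SkSet W (n + 1) k := by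
  rintro x ⟨j, hj, s, y, hy⟩
  exact ⟨j, hj.trans (Nat.le_succ n), s, y, hy⟩

/-- The inclusion of the `n`-skeleton of `W` into the `(n+1)`-skeleton. -/
def skSuccInclusion (n : ℕ) : Sk W n ⟶ Sk W (n + 1) where
  app k := TopCat.ofHom ⟨fun x => ⟨x.1, skSet_mono W n k x.2⟩,
    Continuous.subtype_mk continuous_subtype_val _⟩
  naturality _ _ _ := rfl

end Split


namespace CFS
open NNReal Finset SimplexCategory


theorem toTopMap_apply {x y : SimplexCategory} (f : x ⟶ y) (g : x.toTopObj) (i : Fin (y.len+1)) :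
    (SimplexCategory.toTopMap f g).1 i
      = ∑ j ∈ Finset.univ.filter (fun j => f.toOrderHom j = i), g.1 j := by
  classical
  dsimp only [SimplexCategory.toTopMap]

theorem continuous_toTopMap' {x y : SimplexCategory} (f : x ⟶ y) :
    Continuous (SimplexCategory.toTopMap f) := by
  apply Continuous.subtype_mk
  apply continuous_pi
  intro i
  exact continuous_finset_sum _ fun j _ => (continuous_apply j).comp continuous_subtype_val

/-- support of a point of the topological simplex -/
def supp {m : SimplexCategory} (t : m.toTopObj) : Finset (Fin (m.len+1)) :=
  Finset.univ.filter (fun i => t.1 i ≠ 0)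

lemma mem_supp {m : SimplexCategory} {t : m.toTopObj} {i : Fin (m.len+1)} :
    i ∈ supp t ↔ t.1 i ≠ 0 := by simp [supp]

lemma supp_nonempty {m : SimplexCategory} (t : m.toTopObj) : (supp t).Nonempty := by
  by_contra h
  rw [Finset.not_nonempty_iff_eq_empty] at h
  have h1 : ∑ i, t.1 i = 1 := t.2
  have h0 : ∀ i ∈ Finset.univ, t.1 i = 0 := by
    intro i _
    by_contra hi
    exact absurd (h ▸ mem_supp.2 hi) (Finset.notMem_empty i)
  rw [Finset.sum_eq_zero h0] at h1
  exact zero_ne_one h1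

/-- all coordinates positive -/
def AllPos {m : SimplexCategory} (t : m.toTopObj) : Prop := ∀ i, t.1 i ≠ 0

/-- object of the face spanned by `S` -/
def fobj {m : SimplexCategory} (S : Finset (Fin (m.len+1))) : SimplexCategory :=
  SimplexCategory.mk (S.card - 1)

lemma fobj_card {m : SimplexCategory} (S : Finset (Fin (m.len+1))) (hS : S.Nonempty) :
    S.card = (fobj S).len + 1 := by
  have : 1 ≤ S.card := hS.card_pos
  simp [fobj]
  omega

/-- the face inclusion as an order embedding -/
def femb {m : SimplexCategory} (S : Finset (Fin (m.len+1))) (hS : S.Nonempty) :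
    Fin ((fobj S).len + 1) ↪o Fin (m.len+1) :=
  S.orderEmbOfFin (fobj_card S hS)

/-- the face inclusion as a morphism of the simplex category -/
def fhom {m : SimplexCategory} (S : Finset (Fin (m.len+1))) (hS : S.Nonempty) :
    fobj S ⟶ m :=
  SimplexCategory.Hom.mk (femb S hS).toOrderHom

lemma fhom_apply {m : SimplexCategory} (S : Finset (Fin (m.len+1))) (hS : S.Nonempty)
    (i : Fin ((fobj S).len + 1)) : (fhom S hS).toOrderHom i = femb S hS i := rfl

lemma fhom_mem {m : SimplexCategory} (S : Finset (Fin (m.len+1))) (hS : S.Nonempty)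
    (i : Fin ((fobj S).len + 1)) : (fhom S hS).toOrderHom i ∈ S :=
  Finset.orderEmbOfFin_mem S (fobj_card S hS) i

lemma fhom_strictMono {m : SimplexCategory} (S : Finset (Fin (m.len+1))) (hS : S.Nonempty) :
    StrictMono (fhom S hS).toOrderHom :=
  (femb S hS).strictMono

lemma fhom_inj {m : SimplexCategory} (S : Finset (Fin (m.len+1))) (hS : S.Nonempty) :
    Function.Injective (fhom S hS).toOrderHom :=
  (fhom_strictMono S hS).injective

lemma fhom_surj_on {m : SimplexCategory} (S : Finset (Fin (m.len+1))) (hS : S.Nonempty)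
    {j : Fin (m.len+1)} (hj : j ∈ S) : ∃ i, (fhom S hS).toOrderHom i = j := by
  have : (j : Fin (m.len+1)) ∈ Set.range (femb S hS) := by
    rw [femb, Finset.range_orderEmbOfFin]; exact hj
  obtain ⟨i, hi⟩ := this
  exact ⟨i, hi⟩

/-- restriction of a point to a face containing its support -/
def restr {m : SimplexCategory} (S : Finset (Fin (m.len+1))) (hS : S.Nonempty)
    (t : m.toTopObj) (h : supp t ⊆ S) : (fobj S).toTopObj := by
  classical
  refine ⟨fun i => t.1 (femb S hS i), ?_⟩
  have h1 : ∑ i, t.1 (femb S hS i) = ∑ j ∈ S, t.1 j := by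
    rw [← Finset.sum_image (f := fun j => t.1 j)
      (g := fun i => femb S hS i) (by intro a _ b _ hab; exact (femb S hS).injective hab)]
    congr 1
    ext j
    simp only [Finset.mem_image, Finset.mem_univ, true_and]
    constructor
    · rintro ⟨i, _, rfl⟩; exact Finset.orderEmbOfFin_mem S (fobj_card S hS) i
    · intro hj
      have : (j : Fin (m.len+1)) ∈ Set.range (femb S hS) := by
        rw [femb, Finset.range_orderEmbOfFin]; exact hj
      obtain ⟨i, hi⟩ := this
      exact ⟨i, hi⟩
  have h2 : ∑ j ∈ S, t.1 j = ∑ j, t.1 j := by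
    apply Finset.sum_subset (Finset.subset_univ S)
    intro j _ hj
    by_contra hj0
    exact hj (h (mem_supp.2 hj0))
  have h3 : ∑ j, t.1 j = 1 := t.2
  show ∑ i, t.1 (femb S hS i) = 1
  rw [h1, h2, h3]

lemma restr_apply {m : SimplexCategory} (S : Finset (Fin (m.len+1))) (hS : S.Nonempty)
    (t : m.toTopObj) (h : supp t ⊆ S) (i) :
    (restr S hS t h).1 i = t.1 (femb S hS i) := rfl

lemma toTopMap_fhom_restr {m : SimplexCategory} (S : Finset (Fin (m.len+1))) (hS : S.Nonempty)
    (t : m.toTopObj) (h : supp t ⊆ S) :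
    SimplexCategory.toTopMap (fhom S hS) (restr S hS t h) = t := by
  classical
  apply Subtype.ext
  funext i
  rw [toTopMap_apply]
  by_cases hi : i ∈ S
  · obtain ⟨i0, hi0⟩ := fhom_surj_on S hS hi
    have : Finset.univ.filter (fun j => (fhom S hS).toOrderHom j = i) = {i0} := by
      ext j
      simp only [Finset.mem_filter, Finset.mem_univ, true_and, Finset.mem_singleton]
      constructor
      · intro hj; exact fhom_inj S hS (hj.trans hi0.symm)
      · rintro rfl; exact hi0
    rw [this, Finset.sum_singleton, restr_apply, ← fhom_apply S hS, hi0]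
  · have : Finset.univ.filter (fun j => (fhom S hS).toOrderHom j = i) = ∅ := by
      ext j
      simp only [Finset.mem_filter, Finset.mem_univ, true_and, Finset.notMem_empty,
        iff_false]
      intro hj
      exact hi (hj ▸ fhom_mem S hS j)
    rw [this, Finset.sum_empty]
    by_contra h0
    exact hi (h (mem_supp.2 fun hti => h0 hti.symm))

lemma restr_allPos {m : SimplexCategory} (t : m.toTopObj) :
    AllPos (restr (supp t) (supp_nonempty t) t (subset_refl _)) := by
  intro i
  rw [restr_apply]
  exact mem_supp.1 (Finset.orderEmbOfFin_mem _ _ i)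



variable {a b c m : SimplexCategory}

lemma toTopMap_allPos {f : a ⟶ b} (hf : Function.Surjective f.toOrderHom)
    {u : a.toTopObj} (hu : AllPos u) : AllPos (SimplexCategory.toTopMap f u) := by
  classical
  intro i
  rw [toTopMap_apply]
  obtain ⟨j, hj⟩ := hf i
  intro h0
  rw [Finset.sum_eq_zero_iff] at h0
  exact hu j (h0 j (by simp [hj]))

lemma supp_toTopMap_mono {f : a ⟶ b} (hf : Function.Injective f.toOrderHom)
    {u : a.toTopObj} (hu : AllPos u) :
    supp (SimplexCategory.toTopMap f u) = Finset.univ.image f.toOrderHom := by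
  classical
  ext i
  rw [mem_supp, toTopMap_apply]
  simp only [Finset.mem_image, Finset.mem_univ, true_and]
  constructor
  · intro h
    by_contra hne
    push_neg at hne
    apply h
    apply Finset.sum_eq_zero
    intro j hj
    simp only [Finset.mem_filter] at hj
    exact absurd hj.2 (hne j)
  · rintro ⟨j, rfl⟩
    intro h0
    rw [Finset.sum_eq_zero_iff] at h0
    exact hu j (h0 j (by simp))

lemma toTopMap_mono_apply {f : a ⟶ b} (hf : Function.Injective f.toOrderHom)
    (u : a.toTopObj) (j : Fin (a.len+1)) :
    (SimplexCategory.toTopMap f u).1 (f.toOrderHom j) = u.1 j := by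
  classical
  rw [toTopMap_apply]
  have : Finset.univ.filter (fun i => f.toOrderHom i = f.toOrderHom j) = {j} := by
    ext i
    simp only [Finset.mem_filter, Finset.mem_univ, true_and, Finset.mem_singleton]
    exact ⟨fun h => hf h, fun h => h ▸ rfl⟩
  rw [this, Finset.sum_singleton]

lemma toTopMap_id (u : m.toTopObj) : SimplexCategory.toTopMap (𝟙 m) u = u := by
  classical
  apply Subtype.ext
  funext i
  rw [toTopMap_apply]
  have : Finset.univ.filter (fun j => (𝟙 m : m ⟶ m).toOrderHom j = i) = {i} := by
    ext j
    simp [SimplexCategory.id_toOrderHom]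
  rw [this, Finset.sum_singleton]

lemma toTopMap_comp (f : a ⟶ b) (g : b ⟶ c) (u : a.toTopObj) :
    SimplexCategory.toTopMap (f ≫ g) u
      = SimplexCategory.toTopMap g (SimplexCategory.toTopMap f u) := by
  classical
  apply Subtype.ext
  funext i
  simp only [toTopMap_apply]
  rw [← Finset.sum_fiberwise_of_maps_to (s := Finset.univ.filter (fun j => (f ≫ g).toOrderHom j = i))
    (t := Finset.univ.filter (fun k => g.toOrderHom k = i)) (g := f.toOrderHom) (by
      intro j hj
      simp only [Finset.mem_filter, Finset.mem_univ, true_and, SimplexCategory.comp_toOrderHom,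
        OrderHom.comp_coe, Function.comp_apply] at hj ⊢
      exact hj)]
  refine Finset.sum_congr rfl fun k hk => ?_
  refine Finset.sum_congr ?_ fun _ _ => rfl
  ext j
  simp only [Finset.mem_filter, Finset.mem_univ, true_and, SimplexCategory.comp_toOrderHom,
    OrderHom.comp_coe, Function.comp_apply] at hk ⊢
  constructor
  · exact fun h => h.2
  · intro h
    exact ⟨by rw [h]; exact hk, h⟩

/-- the image of a morphism, as a finset -/
def imgS (f : a ⟶ b) : Finset (Fin (b.len+1)) := Finset.univ.image f.toOrderHom

lemma imgS_nonempty (f : a ⟶ b) : (imgS f).Nonempty := by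
  exact ⟨f.toOrderHom 0, by simp [imgS]⟩

/-- the mono part of the epi-mono factorization -/
def factM (f : a ⟶ b) : fobj (imgS f) ⟶ b := fhom (imgS f) (imgS_nonempty f)

/-- the epi part of the epi-mono factorization -/
def factE (f : a ⟶ b) : a ⟶ fobj (imgS f) :=
  SimplexCategory.Hom.mk
    { toFun := fun i => ((imgS f).orderIsoOfFin (fobj_card _ (imgS_nonempty f))).symm
        ⟨f.toOrderHom i, by simp [imgS]⟩
      monotone' := by
        intro i j hij
        dsimp only
        exact OrderIso.monotone _
          (Subtype.mk_le_mk.2 (f.toOrderHom.monotone hij)) }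

lemma factE_surj (f : a ⟶ b) : Function.Surjective (factE f).toOrderHom := by
  intro v
  obtain ⟨⟨w, hw⟩, hv⟩ := ((imgS f).orderIsoOfFin (fobj_card _ (imgS_nonempty f))).symm.surjective v
  simp only [imgS, Finset.mem_image, Finset.mem_univ, true_and] at hw
  obtain ⟨i, hi⟩ := hw
  refine ⟨i, ?_⟩
  show ((imgS f).orderIsoOfFin _).symm ⟨f.toOrderHom i, _⟩ = v
  rw [← hv]
  congr 1
  exact Subtype.ext hi

lemma fact_eq (f : a ⟶ b) : factE f ≫ factM f = f := by
  apply SimplexCategory.Hom.ext'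
  apply OrderHom.ext
  funext i
  rw [SimplexCategory.comp_toOrderHom]
  show (factM f).toOrderHom ((factE f).toOrderHom i) = f.toOrderHom i
  rw [factM, fhom_apply]
  show femb _ _ (((imgS f).orderIsoOfFin _).symm ⟨f.toOrderHom i, _⟩) = _
  rw [femb, ← Finset.coe_orderIsoOfFin_apply]
  show ((((imgS f).orderIsoOfFin _) (((imgS f).orderIsoOfFin _).symm
    ⟨f.toOrderHom i, by simp [imgS]⟩)) : Fin (b.len+1)) = f.toOrderHom i
  rw [OrderIso.apply_symm_apply]




section SplitData

variable {W : SimplicialObject TopCat.{0}} {N : ∀ n : SimplexCategory, Set (W.obj (op n))}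

/-- inverse of the splitting homeomorphism -/
def splitData (hN : IsSplitting W N) {m : SimplexCategory} (x : W.obj (op m)) :
    Σ p : SurjFrom (op m), ↥(N p.1) :=
  ((hN (op m)).homeomorph _).symm x

lemma splitData_spec (hN : IsSplitting W N) {m : SimplexCategory} (x : W.obj (op m)) :
    splitCanonicalMap W N (op m) (splitData hN x) = x := by
  show ((hN (op m)).homeomorph (splitCanonicalMap W N (op m)))
    (((hN (op m)).homeomorph (splitCanonicalMap W N (op m))).symm x) = x
  exact Homeomorph.apply_symm_apply _ x

lemma splitData_unique (hN : IsSplitting W N) {m : SimplexCategory}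
    (q : Σ p : SurjFrom (op m), ↥(N p.1)) (x : W.obj (op m))
    (h : splitCanonicalMap W N (op m) q = x) : q = splitData hN x :=
  (hN (op m)).injective (by rw [splitData_spec, h])

/-- canonical degree -/
def sdeg (hN : IsSplitting W N) {m : SimplexCategory} (x : W.obj (op m)) : SimplexCategory :=
  (splitData hN x).1.1

/-- canonical epi -/
def sepi (hN : IsSplitting W N) {m : SimplexCategory} (x : W.obj (op m)) : m ⟶ sdeg hN x :=
  (splitData hN x).1.2.1

lemma sepi_surj (hN : IsSplitting W N) {m : SimplexCategory} (x : W.obj (op m)) :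
    Function.Surjective (sepi hN x).toOrderHom :=
  (splitData hN x).1.2.2

/-- canonical nondegenerate element -/
def selt (hN : IsSplitting W N) {m : SimplexCategory} (x : W.obj (op m)) :
    W.obj (op (sdeg hN x)) :=
  ((splitData hN x).2 : ↥(N (splitData hN x).1.1)).1

lemma selt_mem (hN : IsSplitting W N) {m : SimplexCategory} (x : W.obj (op m)) :
    selt hN x ∈ N (sdeg hN x) :=
  (splitData hN x).2.2

lemma selt_spec (hN : IsSplitting W N) {m : SimplexCategory} (x : W.obj (op m)) :
    W.map (sepi hN x).op (selt hN x) = x :=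
  splitData_spec hN x

lemma sdeg_le (hN : IsSplitting W N) {m : SimplexCategory} (x : W.obj (op m)) :
    (sdeg hN x).len ≤ m.len := by
  have h := Fintype.card_le_of_surjective _ (sepi_surj hN x)
  simpa using h

/-- the splitting step of the canonical form -/
def sstep (hN : IsSplitting W N) (p : GeomRealPre W) : GeomRealPre W :=
  ⟨sdeg hN p.2.1, selt hN p.2.1, SimplexCategory.toTopMap (sepi hN p.2.1) p.2.2⟩

/-- the canonical form of a point of the pre-realization -/
def cfun (hN : IsSplitting W N) (p : GeomRealPre W) : GeomRealPre W :=
  sstep hN ⟨fobj (supp p.2.2),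
    W.map (fhom (supp p.2.2) (supp_nonempty p.2.2)).op p.2.1,
    restr _ (supp_nonempty p.2.2) p.2.2 (subset_refl _)⟩

lemma sstep_pres (hN : IsSplitting W N) {m j : SimplexCategory} (σ : m ⟶ j)
    (hσ : Function.Surjective σ.toOrderHom) (y : W.obj (op j)) (hy : y ∈ N j)
    (u : m.toTopObj) :
    sstep hN ⟨m, W.map σ.op y, u⟩ = ⟨j, y, SimplexCategory.toTopMap σ u⟩ := by
  have h : (⟨⟨j, σ, hσ⟩, ⟨y, hy⟩⟩ : Σ p : SurjFrom (op m), ↥(N p.1))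
      = splitData hN (W.map σ.op y) := splitData_unique hN _ _ rfl
  show (⟨(splitData hN (W.map σ.op y)).1.1, (splitData hN (W.map σ.op y)).2.1,
    SimplexCategory.toTopMap (splitData hN (W.map σ.op y)).1.2.1 u⟩ : GeomRealPre W)
    = ⟨j, y, SimplexCategory.toTopMap σ u⟩
  rw [← h]

lemma sstep_of_mem (hN : IsSplitting W N) {j : SimplexCategory} {y : W.obj (op j)}
    (hy : y ∈ N j) (u : j.toTopObj) :
    sstep hN ⟨j, y, u⟩ = ⟨j, y, u⟩ := by
  have h1 : Function.Surjective (𝟙 j : j ⟶ j).toOrderHom := fun i => ⟨i, rfl⟩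
  have h2 : W.map (𝟙 j : j ⟶ j).op y = y := by
    rw [CategoryTheory.op_id, W.map_id]; rfl
  have h := sstep_pres hN (𝟙 j) h1 y hy u
  rw [h2] at h
  rw [h, toTopMap_id]

lemma sstep_epi (hN : IsSplitting W N) {a b : SimplexCategory} (π : a ⟶ b)
    (hπ : Function.Surjective π.toOrderHom) (x : W.obj (op b)) (u : a.toTopObj) :
    sstep hN ⟨a, W.map π.op x, u⟩ = sstep hN ⟨b, x, SimplexCategory.toTopMap π u⟩ := by
  have hx : W.map (π ≫ sepi hN x).op (selt hN x) = W.map π.op x := by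
    conv_rhs => rw [← selt_spec hN x]
    rw [CategoryTheory.op_comp, W.map_comp]
    rfl
  have hsurj : Function.Surjective (π ≫ sepi hN x).toOrderHom := by
    rw [SimplexCategory.comp_toOrderHom]
    exact (sepi_surj hN x).comp hπ
  rw [← hx, sstep_pres hN _ hsurj _ (selt_mem hN x) u, toTopMap_comp]
  conv_rhs => rw [← selt_spec hN x]
  rw [sstep_pres hN _ (sepi_surj hN x) _ (selt_mem hN x)]

lemma rel_sstep (hN : IsSplitting W N) (p : GeomRealPre W) :
    GeomRealRel W p (sstep hN p) := by
  refine ⟨sepi hN p.2.1, ?_, rfl⟩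
  exact (selt_spec hN p.2.1).symm

/-- the intermediate point in the canonical chain -/
def cmid (p : GeomRealPre W) : GeomRealPre W :=
  ⟨fobj (supp p.2.2),
    W.map (fhom (supp p.2.2) (supp_nonempty p.2.2)).op p.2.1,
    restr _ (supp_nonempty p.2.2) p.2.2 (subset_refl _)⟩

lemma cfun_eq_sstep_cmid (hN : IsSplitting W N) (p : GeomRealPre W) :
    cfun hN p = sstep hN (cmid p) := rfl

lemma rel_cmid (p : GeomRealPre W) : GeomRealRel W (cmid p) p := by
  refine ⟨fhom (supp p.2.2) (supp_nonempty p.2.2), rfl, ?_⟩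
  exact (toTopMap_fhom_restr _ (supp_nonempty p.2.2) _ (subset_refl _)).symm

lemma eqv_cfun (hN : IsSplitting W N) (p : GeomRealPre W) :
    Relation.EqvGen (GeomRealRel W) p (cfun hN p) := by
  apply Relation.EqvGen.trans _ (cmid p) _
  · exact Relation.EqvGen.symm _ _ (Relation.EqvGen.rel _ _ (rel_cmid p))
  · exact Relation.EqvGen.rel _ _ (rel_sstep hN (cmid p))

lemma map_op_comp {a b c : SimplexCategory} (f : a ⟶ b) (g : b ⟶ c) (z : W.obj (op c)) :
    W.map (f ≫ g).op z = W.map f.op (W.map g.op z) := by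
  rw [CategoryTheory.op_comp, W.map_comp]
  rfl

lemma cfun_eq_mono (hN : IsSplitting W N) {c m : SimplexCategory} (γ : c ⟶ m)
    (hγ : StrictMono γ.toOrderHom) {u : c.toTopObj} (hu : AllPos u)
    (x : W.obj (op m)) :
    cfun hN ⟨m, x, SimplexCategory.toTopMap γ u⟩ = sstep hN ⟨c, W.map γ.op x, u⟩ := by
  classical
  have key1 : supp (SimplexCategory.toTopMap γ u) = Finset.univ.image γ.toOrderHom :=
    supp_toTopMap_mono hγ.injective hu
  have keyval : ∀ i, (SimplexCategory.toTopMap γ u).1 (γ.toOrderHom i) = u.1 i :=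
    toTopMap_mono_apply hγ.injective u
  have lhs_eq : cfun hN ⟨m, x, SimplexCategory.toTopMap γ u⟩
      = sstep hN (cmid ⟨m, x, SimplexCategory.toTopMap γ u⟩) := rfl
  rw [lhs_eq]
  congr 1
  generalize hgen : SimplexCategory.toTopMap γ u = t' at key1 keyval ⊢
  have key2 : fobj (supp t') = c := by
    apply SimplexCategory.ext
    have hc : (supp t').card = c.len + 1 := by
      rw [key1, Finset.card_image_of_injective _ hγ.injective, Finset.card_univ, Fintype.card_fin]
    simp [fobj, hc]
  subst key2
  have key3 : γ = fhom (supp t') (supp_nonempty t') := by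
    apply SimplexCategory.Hom.ext'
    apply OrderHom.ext
    have huniq := Finset.orderEmbOfFin_unique (fobj_card (supp t') (supp_nonempty t'))
      (f := fun i => γ.toOrderHom i)
      (fun i => mem_supp.2 (fun h0 => hu i ((keyval i).symm.trans h0))) hγ
    funext i
    rw [fhom_apply, femb, ← huniq]
  have key4 : restr (supp t') (supp_nonempty t') t' (subset_refl _) = u := by
    apply Subtype.ext
    funext i
    rw [restr_apply, femb]
    have h5 : ((supp t').orderEmbOfFin (fobj_card _ (supp_nonempty t'))) i = γ.toOrderHom i := by
      rw [key3, fhom_apply, femb]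
    rw [h5]
    exact keyval i
  show (⟨fobj (supp t'), W.map (fhom (supp t') (supp_nonempty t')).op x,
    restr _ (supp_nonempty t') t' (subset_refl _)⟩ : GeomRealPre W) = _
  rw [key4, ← key3]

lemma cfun_of_allPos (hN : IsSplitting W N) {m : SimplexCategory} (x : W.obj (op m))
    {u : m.toTopObj} (hu : AllPos u) :
    cfun hN ⟨m, x, u⟩ = sstep hN ⟨m, x, u⟩ := by
  have h1 : StrictMono (𝟙 m : m ⟶ m).toOrderHom := fun i j hij => hij
  have h := cfun_eq_mono hN (𝟙 m) h1 hu x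
  rw [toTopMap_id] at h
  rw [h]
  have h2 : W.map (𝟙 m : m ⟶ m).op x = x := by
    rw [CategoryTheory.op_id, W.map_id]; rfl
  rw [h2]

lemma cfun_rel (hN : IsSplitting W N) {p q : GeomRealPre W}
    (h : GeomRealRel W p q) : cfun hN p = cfun hN q := by
  classical
  obtain ⟨a, x, t⟩ := p
  obtain ⟨b, z, s⟩ := q
  obtain ⟨θ, hx, hs⟩ := h
  dsimp at θ hx hs
  have hrec : SimplexCategory.toTopMap (fhom (supp t) (supp_nonempty t))
      (restr (supp t) (supp_nonempty t) t (subset_refl _)) = t :=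
    toTopMap_fhom_restr _ (supp_nonempty t) _ (subset_refl _)
  set δ : fobj (supp t) ⟶ a := fhom (supp t) (supp_nonempty t) with hδ
  set t0 := restr (supp t) (supp_nonempty t) t (subset_refl _) with ht0
  set π := factE (δ ≫ θ) with hπ
  set ι := factM (δ ≫ θ) with hι
  have hfact : π ≫ ι = δ ≫ θ := fact_eq (δ ≫ θ)
  have hπs : Function.Surjective π.toOrderHom := factE_surj (δ ≫ θ)
  have hιm : StrictMono ι.toOrderHom := fhom_strictMono _ _
  have hALL : AllPos (SimplexCategory.toTopMap π t0) :=
    toTopMap_allPos hπs (restr_allPos t)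
  have h2 : W.map δ.op (W.map θ.op z) = W.map π.op (W.map ι.op z) := by
    rw [← map_op_comp, ← map_op_comp, hfact]
  have lhs_eq : cfun hN ⟨a, x, t⟩
      = sstep hN ⟨fobj (imgS (δ ≫ θ)), W.map ι.op z, SimplexCategory.toTopMap π t0⟩ := by
    have h1 : cfun hN ⟨a, x, t⟩
        = sstep hN ⟨fobj (supp t), W.map π.op (W.map ι.op z), t0⟩ := by
      show sstep hN ⟨fobj (supp t), W.map δ.op x, t0⟩ = _
      rw [hx, h2]
    rw [h1]
    exact sstep_epi hN π hπs (W.map ι.op z) t0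
  have rhs_eq : cfun hN ⟨b, z, s⟩
      = sstep hN ⟨fobj (imgS (δ ≫ θ)), W.map ι.op z, SimplexCategory.toTopMap π t0⟩ := by
    have hs2 : SimplexCategory.toTopMap ι (SimplexCategory.toTopMap π t0) = s := by
      rw [← toTopMap_comp, hfact, toTopMap_comp, hrec, hs]
    rw [← hs2]
    exact cfun_eq_mono hN ι hιm hALL z
  rw [lhs_eq, rhs_eq]

lemma cfun_eqv (hN : IsSplitting W N) {p q : GeomRealPre W}
    (h : Relation.EqvGen (GeomRealRel W) p q) : cfun hN p = cfun hN q := by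
  induction h with
  | rel a b hab => exact cfun_rel hN hab
  | refl a => rfl
  | symm a b _ ih => exact ih.symm
  | trans a b c _ _ ih1 ih2 => exact ih1.trans ih2

lemma mk_eq_iff_cfun (hN : IsSplitting W N) (p q : GeomRealPre W) :
    Quot.mk (GeomRealRel W) p = Quot.mk (GeomRealRel W) q ↔ cfun hN p = cfun hN q := by
  constructor
  · intro h
    exact cfun_eqv hN (Quot.eqvGen_exact h)
  · intro h
    have h1 := Quot.eqvGen_sound (eqv_cfun hN p)
    have h2 := Quot.eqvGen_sound (eqv_cfun hN q)
    rw [h1, h2, h]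

lemma cfun_allPos (hN : IsSplitting W N) (p : GeomRealPre W) :
    AllPos (cfun hN p).2.2 :=
  toTopMap_allPos (sepi_surj hN _) (restr_allPos p.2.2)

lemma cfun_mem (hN : IsSplitting W N) (p : GeomRealPre W) :
    (cfun hN p).2.1 ∈ N (cfun hN p).1 :=
  selt_mem hN _

lemma cfun_idem (hN : IsSplitting W N) (p : GeomRealPre W) :
    cfun hN (cfun hN p) = cfun hN p := by
  have h1 := cfun_of_allPos hN (cfun hN p).2.1 (cfun_allPos hN p)
  exact h1.trans (sstep_of_mem hN (cfun_mem hN p) (cfun hN p).2.2)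

lemma cfun_dim_le (hN : IsSplitting W N) {m : SimplexCategory} (x : W.obj (op m))
    (t : m.toTopObj) :
    (cfun hN ⟨m, x, t⟩).1.len ≤ (sdeg hN x).len := by
  classical
  set δ : fobj (supp t) ⟶ m := fhom (supp t) (supp_nonempty t) with hδ
  set t0 := restr (supp t) (supp_nonempty t) t (subset_refl _) with ht0
  set π := factE (δ ≫ sepi hN x) with hπ
  set ι := factM (δ ≫ sepi hN x) with hι
  have hfact : π ≫ ι = δ ≫ sepi hN x := fact_eq _
  have hπs : Function.Surjective π.toOrderHom := factE_surj _
  have h2 : W.map δ.op x = W.map π.op (W.map ι.op (selt hN x)) := by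
    conv_lhs => rw [← selt_spec hN x]
    rw [← map_op_comp, ← map_op_comp, hfact]
  have h1 : cfun hN ⟨m, x, t⟩
      = sstep hN ⟨fobj (imgS (δ ≫ sepi hN x)), W.map ι.op (selt hN x),
          SimplexCategory.toTopMap π t0⟩ := by
    have h0 : cfun hN ⟨m, x, t⟩
        = sstep hN ⟨fobj (supp t), W.map π.op (W.map ι.op (selt hN x)), t0⟩ := by
      show sstep hN ⟨fobj (supp t), W.map δ.op x, t0⟩ = _
      rw [h2]
    rw [h0]
    exact sstep_epi hN π hπs _ t0
  rw [h1]
  have h3 : (sstep hN ⟨fobj (imgS (δ ≫ sepi hN x)), W.map ι.op (selt hN x),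
      SimplexCategory.toTopMap π t0⟩).1.len ≤ (fobj (imgS (δ ≫ sepi hN x))).len :=
    sdeg_le hN _
  refine h3.trans ?_
  have h4 : (imgS (δ ≫ sepi hN x)).card ≤ (sdeg hN x).len + 1 := by
    refine le_trans (Finset.card_le_univ _) ?_
    simp
  have h5 : 1 ≤ (imgS (δ ≫ sepi hN x)).card := (imgS_nonempty _).card_pos
  simp only [fobj, SimplexCategory.len_mk]
  exact Nat.sub_le_of_le_add h4

lemma sdeg_map_le (hN : IsSplitting W N) {m j : SimplexCategory} (s : m ⟶ j)
    (y : W.obj (op j)) : (sdeg hN (W.map s.op y)).len ≤ j.len := by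
  classical
  set π := factE s with hπ
  set ι := factM s with hι
  have hfact : π ≫ ι = s := fact_eq _
  have hπs : Function.Surjective π.toOrderHom := factE_surj _
  set z := W.map ι.op y with hz
  have h1 : W.map s.op y = W.map (π ≫ sepi hN z).op (selt hN z) := by
    rw [map_op_comp, selt_spec, hz, ← map_op_comp, hfact]
  have hsurj : Function.Surjective (π ≫ sepi hN z).toOrderHom := by
    rw [SimplexCategory.comp_toOrderHom]
    exact (sepi_surj hN z).comp hπs
  have h2 : (⟨⟨sdeg hN z, π ≫ sepi hN z, hsurj⟩, ⟨selt hN z, selt_mem hN z⟩⟩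
      : Σ p : SurjFrom (op m), ↥(N p.1)) = splitData hN (W.map s.op y) :=
    splitData_unique hN _ _ h1.symm
  have h3 : sdeg hN (W.map s.op y) = sdeg hN z := by
    rw [sdeg, ← h2]
  rw [h3]
  refine (sdeg_le hN z).trans ?_
  have h4 : (imgS s).card ≤ j.len + 1 := by
    refine le_trans (Finset.card_le_univ _) ?_
    simp
  have h5 : 1 ≤ (imgS s).card := (imgS_nonempty _).card_pos
  simp only [fobj, SimplexCategory.len_mk]
  omega

lemma mem_skSet_iff (hN : IsSplitting W N) (n : ℕ) {m : SimplexCategory}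
    (x : W.obj (op m)) :
    x ∈ SkSet W n (op m) ↔ (sdeg hN x).len ≤ n := by
  constructor
  · rintro ⟨j, hj, s, y, rfl⟩
    exact (sdeg_map_le hN s y).trans hj
  · intro h
    exact ⟨sdeg hN x, h, sepi hN x, selt hN x, (selt_spec hN x).symm⟩

lemma sdeg_of_mem (hN : IsSplitting W N) {j : SimplexCategory} {y : W.obj (op j)}
    (hy : y ∈ N j) : sdeg hN y = j := by
  have h1 : Function.Surjective (𝟙 j : j ⟶ j).toOrderHom := fun i => ⟨i, rfl⟩
  have h2 : W.map (𝟙 j : j ⟶ j).op y = y := by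
    rw [CategoryTheory.op_id, W.map_id]; rfl
  have h := splitData_unique hN (⟨⟨j, 𝟙 j, h1⟩, ⟨y, hy⟩⟩ : Σ p : SurjFrom (op j), ↥(N p.1)) y h2
  rw [sdeg, ← h]

/-- canonical form on the geometric realization -/
def canon (hN : IsSplitting W N) : GeomReal W → GeomRealPre W :=
  Quot.lift (cfun hN) (fun _ _ h => cfun_rel hN h)

lemma canon_mk (hN : IsSplitting W N) (p : GeomRealPre W) :
    canon hN (Quot.mk (GeomRealRel W) p) = cfun hN p := rfl

lemma mk_canon (hN : IsSplitting W N) (z : GeomReal W) :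
    Quot.mk (GeomRealRel W) (canon hN z) = z := by
  induction z using Quot.ind with
  | _ p => exact (Quot.eqvGen_sound (eqv_cfun hN p)).symm

lemma canon_allPos (hN : IsSplitting W N) (z : GeomReal W) : AllPos (canon hN z).2.2 := by
  induction z using Quot.ind with
  | _ p => exact cfun_allPos hN p

lemma canon_mem (hN : IsSplitting W N) (z : GeomReal W) :
    (canon hN z).2.1 ∈ N (canon hN z).1 := by
  induction z using Quot.ind with
  | _ p => exact cfun_mem hN p

end SplitData

section Topo

variable {W : SimplicialObject TopCat.{0}} {N : ∀ n : SimplexCategory, Set (W.obj (op n))}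

/-- the slice of a level consisting of points supported in a face -/
def slice (W : SimplicialObject TopCat.{0}) (m : SimplexCategory)
    (S : Finset (Fin (m.len+1))) : Set ((W.obj (op m) : Type) × m.toTopObj) :=
  {p | ∀ i, i ∉ S → p.2.1 i = 0}

lemma supp_subset_of_slice {m : SimplexCategory} {S : Finset (Fin (m.len+1))}
    {p : (W.obj (op m) : Type) × m.toTopObj} (h : p ∈ slice W m S) : supp p.2 ⊆ S := by
  intro i hi
  by_contra hiS
  exact (mem_supp.1 hi) (h i hiS)

lemma slice_of_supp_subset {m : SimplexCategory} {S : Finset (Fin (m.len+1))}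
    {p : (W.obj (op m) : Type) × m.toTopObj} (h : supp p.2 ⊆ S) : p ∈ slice W m S := by
  intro i hi
  by_contra h0
  exact hi (h (mem_supp.2 h0))

lemma isClosed_slice (m : SimplexCategory) (S : Finset (Fin (m.len+1))) :
    IsClosed (slice W m S) := by
  have : slice W m S = ⋂ (i : Fin (m.len+1)), ⋂ (_ : i ∉ S),
      (setOf fun p : (W.obj (op m) : Type) × m.toTopObj => p.2.1 i = 0) := by
    ext p
    simp [slice]
    exact Iff.rfl
  rw [this]
  refine isClosed_iInter fun i => isClosed_iInter fun hi => ?_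
  exact isClosed_eq ((continuous_apply i).comp (continuous_subtype_val.comp continuous_snd))
    continuous_const

/-- restriction map on a slice -/
def sliceφ (W : SimplicialObject TopCat.{0}) {m : SimplexCategory}
    (S : Finset (Fin (m.len+1))) (hS : S.Nonempty) (q : ↥(slice W m S)) :
    (W.obj (op (fobj S)) : Type) × (fobj S).toTopObj :=
  (W.map (fhom S hS).op q.1.1, restr S hS q.1.2 (supp_subset_of_slice q.2))

lemma continuous_sliceφ {m : SimplexCategory} (S : Finset (Fin (m.len+1)))
    (hS : S.Nonempty) : Continuous (sliceφ W S hS) := by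
  apply Continuous.prodMk
  · exact (W.map (fhom S hS).op).hom.continuous.comp
      (continuous_fst.comp continuous_subtype_val)
  · apply Continuous.subtype_mk
    apply continuous_pi
    intro i
    exact (continuous_apply (femb S hS i)).comp
      (continuous_subtype_val.comp (continuous_snd.comp continuous_subtype_val))

/-- the union-over-faces set associated to a family of subsets of the levels -/
def UF (W : SimplicialObject TopCat.{0})
    (D : ∀ j : SimplexCategory, Set ((W.obj (op j) : Type) × j.toTopObj))
    (m : SimplexCategory) : Set ((W.obj (op m) : Type) × m.toTopObj) :=
  ⋃ (S : Finset (Fin (m.len+1))), ⋃ (hS : S.Nonempty),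
    Subtype.val '' (sliceφ W S hS ⁻¹' D (fobj S))

lemma isClosed_UF {D : ∀ j : SimplexCategory, Set ((W.obj (op j) : Type) × j.toTopObj)}
    (hD : ∀ j, IsClosed (D j)) (m : SimplexCategory) : IsClosed (UF W D m) := by
  refine isClosed_iUnion_of_finite fun S => isClosed_iUnion_of_finite fun hS => ?_
  exact (isClosed_slice m S).isClosedEmbedding_subtypeVal.isClosedMap _
    ((hD _).preimage (continuous_sliceφ S hS))

lemma mem_UF_iff {D : ∀ j : SimplexCategory, Set ((W.obj (op j) : Type) × j.toTopObj)}
    {m : SimplexCategory} (p : (W.obj (op m) : Type) × m.toTopObj) :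
    p ∈ UF W D m ↔ ∃ (S : Finset (Fin (m.len+1))) (hS : S.Nonempty) (h : supp p.2 ⊆ S),
      (W.map (fhom S hS).op p.1, restr S hS p.2 h) ∈ D (fobj S) := by
  constructor
  · intro hp
    simp only [UF, Set.mem_iUnion] at hp
    obtain ⟨S, hS, q, hq, hval⟩ := hp
    refine ⟨S, hS, supp_subset_of_slice (hval ▸ q.2), ?_⟩
    have : q = ⟨p, hval ▸ q.2⟩ := Subtype.ext hval
    rw [this] at hq
    exact hq
  · rintro ⟨S, hS, h, hD⟩
    simp only [UF, Set.mem_iUnion]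
    exact ⟨S, hS, ⟨p, slice_of_supp_subset h⟩, hD, rfl⟩

end Topo

section SkPart

variable {W : SimplicialObject TopCat.{0}} {N : ∀ n : SimplexCategory, Set (W.obj (op n))}

lemma isClosed_skSet (hN : IsSplitting W N) (n : ℕ) (m : SimplexCategory) :
    IsClosed (SkSet W n (op m)) := by
  have h1 : SkSet W n (op m) = (fun x => splitData hN x) ⁻¹' {q | q.1.1.len ≤ n} := by
    ext x
    rw [Set.mem_preimage, Set.mem_setOf_eq]
    exact mem_skSet_iff hN n x
  rw [h1]
  refine IsClosed.preimage ?_ ?_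
  · exact ((hN (op m)).homeomorph _).symm.continuous
  · rw [isClosed_sigma_iff]
    intro p
    by_cases h : p.1.len ≤ n
    · convert isClosed_univ
      ext y
      simp [h]
    · convert isClosed_empty
      ext y
      simp [h]

/-- a point of the pre-realization of the skeleton, seen in `W` -/
def embp (n : ℕ) (p : GeomRealPre (Sk W n)) : GeomRealPre W :=
  ⟨p.1, (p.2.1 : ↥(SkSet W n (op p.1))).1, p.2.2⟩

/-- a point of the pre-realization of `W` with skeletal level, seen in the skeleton -/
def toSkPre (n : ℕ) (r : GeomRealPre W) (hr : r.2.1 ∈ SkSet W n (op r.1)) :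
    GeomRealPre (Sk W n) :=
  ⟨r.1, (⟨r.2.1, hr⟩ : ↥(SkSet W n (op r.1))), r.2.2⟩

lemma toSkPre_congr (n : ℕ) (r r' : GeomRealPre W) (h : r = r')
    (hr : r.2.1 ∈ SkSet W n (op r.1)) (hr' : r'.2.1 ∈ SkSet W n (op r'.1)) :
    toSkPre n r hr = toSkPre n r' hr' := by
  cases h
  rfl

lemma embp_toSkPre (n : ℕ) (r : GeomRealPre W) (hr : r.2.1 ∈ SkSet W n (op r.1)) :
    embp n (toSkPre n r hr) = r := rfl

lemma tau_mk (n : ℕ) (p : GeomRealPre (Sk W n)) :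
    GeomReal.map (skInclusion W n) (Quot.mk (GeomRealRel (Sk W n)) p)
      = Quot.mk (GeomRealRel W) (embp n p) := rfl

lemma cfun_dim_le_n (hN : IsSplitting W N) (n : ℕ) (p : GeomRealPre (Sk W n)) :
    (cfun hN (embp n p)).1.len ≤ n := by
  refine le_trans ?_ ((mem_skSet_iff hN n _).1 (p.2.1 : ↥(SkSet W n (op p.1))).2)
  exact cfun_dim_le hN (embp n p).2.1 (embp n p).2.2

lemma cfun_mem_sk (hN : IsSplitting W N) (n : ℕ) (p : GeomRealPre (Sk W n)) :
    (cfun hN (embp n p)).2.1 ∈ SkSet W n (op (cfun hN (embp n p)).1) := by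
  apply (mem_skSet_iff hN n _).2
  rw [sdeg_of_mem hN (cfun_mem hN _)]
  exact cfun_dim_le_n hN n p

lemma eqv_sk (hN : IsSplitting W N) (n : ℕ) (p : GeomRealPre (Sk W n)) :
    Relation.EqvGen (GeomRealRel (Sk W n)) p
      (toSkPre n (cfun hN (embp n p)) (cfun_mem_sk hN n p)) := by
  set S := supp p.2.2 with hSdef
  have hS : S.Nonempty := supp_nonempty _
  set w : W.obj (op (fobj S)) := W.map (fhom S hS).op (embp n p).2.1 with hw
  have hwmem : w ∈ SkSet W n (op (fobj S)) :=
    skSet_map W n (fhom S hS).op (p.2.1 : ↥(SkSet W n (op p.1))).2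
  set mid : GeomRealPre (Sk W n) :=
    ⟨fobj S, (⟨w, hwmem⟩ : ↥(SkSet W n (op (fobj S)))),
      restr S hS p.2.2 (subset_refl _)⟩ with hmid
  apply Relation.EqvGen.trans _ mid _
  · apply Relation.EqvGen.symm
    apply Relation.EqvGen.rel
    refine ⟨fhom S hS, ?_, ?_⟩
    · exact Subtype.ext rfl
    · exact (toTopMap_fhom_restr S hS p.2.2 (subset_refl _)).symm
  · apply Relation.EqvGen.rel
    refine ⟨sepi hN w, ?_, ?_⟩
    · exact Subtype.ext (selt_spec hN w).symm
    · rfl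

lemma tau_inj (hN : IsSplitting W N) (n : ℕ) :
    Function.Injective (GeomReal.map (skInclusion W n) : GeomReal (Sk W n) → GeomReal W) := by
  intro z1 z2 h
  induction z1 using Quot.ind with
  | _ p =>
  induction z2 using Quot.ind with
  | _ q =>
  rw [tau_mk, tau_mk] at h
  have hc : cfun hN (embp n p) = cfun hN (embp n q) := (mk_eq_iff_cfun hN _ _).1 h
  have h1 := Quot.eqvGen_sound (eqv_sk hN n p)
  have h2 := Quot.eqvGen_sound (eqv_sk hN n q)
  rw [h1, h2]
  exact congrArg _ (toSkPre_congr n _ _ hc _ _)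

lemma mem_range_tau_iff (hN : IsSplitting W N) (n : ℕ) (z : GeomReal W) :
    z ∈ Set.range (GeomReal.map (skInclusion W n) : GeomReal (Sk W n) → GeomReal W)
      ↔ (canon hN z).1.len ≤ n := by
  constructor
  · rintro ⟨w, rfl⟩
    induction w using Quot.ind with
    | _ q =>
    rw [tau_mk]
    exact cfun_dim_le_n hN n q
  · intro h
    have hmem : (canon hN z).2.1 ∈ SkSet W n (op (canon hN z).1) := by
      apply (mem_skSet_iff hN n _).2
      rw [sdeg_of_mem hN (canon_mem hN z)]
      exact h
    refine ⟨Quot.mk _ (toSkPre n (canon hN z) hmem), ?_⟩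
    rw [tau_mk, embp_toSkPre]
    exact mk_canon hN z

end SkPart

section Main

variable {W : SimplicialObject TopCat.{0}} {N : ∀ n : SimplexCategory, Set (W.obj (op n))}

/-- the level sets cut out by a closed subset of the skeleton realization -/
def DC (n : ℕ) (C : Set (GeomReal (Sk W n))) (j : SimplexCategory) :
    Set ((W.obj (op j) : Type) × j.toTopObj) :=
  (fun q : ↥(setOf fun p : (W.obj (op j) : Type) × j.toTopObj => p.1 ∈ SkSet W n (op j)) => q.1) ''
    ((fun q : ↥(setOf fun p : (W.obj (op j) : Type) × j.toTopObj => p.1 ∈ SkSet W n (op j)) =>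
        Quot.mk (GeomRealRel (Sk W n))
          ⟨j, (⟨q.1.1, q.2⟩ : ↥(SkSet W n (op j))), q.1.2⟩) ⁻¹' C)

lemma mem_DC {n : ℕ} {C : Set (GeomReal (Sk W n))} {j : SimplexCategory}
    (p : (W.obj (op j) : Type) × j.toTopObj) :
    p ∈ DC n C j ↔ ∃ h : p.1 ∈ SkSet W n (op j),
      Quot.mk (GeomRealRel (Sk W n)) ⟨j, (⟨p.1, h⟩ : ↥(SkSet W n (op j))), p.2⟩ ∈ C := by
  constructor
  · rintro ⟨q, hq, rfl⟩
    exact ⟨q.2, hq⟩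
  · rintro ⟨h, hQ⟩
    exact ⟨⟨p, h⟩, hQ, rfl⟩

lemma isClosed_DC (hN : IsSplitting W N) (n : ℕ) {C : Set (GeomReal (Sk W n))}
    (hC : IsClosed C) (j : SimplexCategory) : IsClosed (DC n C j) := by
  have hA : IsClosed (setOf fun p : (W.obj (op j) : Type) × j.toTopObj => p.1 ∈ SkSet W n (op j)) :=
    (isClosed_skSet hN n j).preimage continuous_fst
  apply hA.isClosedEmbedding_subtypeVal.isClosedMap
  apply IsClosed.preimage ?_ hC
  apply continuous_quot_mk.comp
  apply Continuous.comp continuous_sigmaMk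
  apply Continuous.prodMk
  · exact Continuous.subtype_mk (continuous_fst.comp continuous_subtype_val) _
  · exact continuous_snd.comp continuous_subtype_val

lemma isClosed_image_tau (hN : IsSplitting W N) (n : ℕ) {C : Set (GeomReal (Sk W n))}
    (hC : IsClosed C) :
    IsClosed ((GeomReal.map (skInclusion W n) : GeomReal (Sk W n) → GeomReal W) '' C) := by
  refine (isQuotientMap_quot_mk (r := GeomRealRel W)).isClosed_preimage.1 ?_
  have hiff : ∀ (A : Set (GeomRealPre W)), IsClosed A ↔ ∀ m, IsClosed (Sigma.mk m ⁻¹' A) :=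
    fun A => isClosed_sigma_iff
  rw [hiff]
  intro m
  have hkey : Sigma.mk m ⁻¹' (Quot.mk (GeomRealRel W) ⁻¹'
      ((GeomReal.map (skInclusion W n) : GeomReal (Sk W n) → GeomReal W) '' C))
      = UF W (DC n C) m := by
    ext p
    simp only [Set.mem_preimage]
    rw [mem_UF_iff]
    constructor
    · rintro ⟨zc, hzC, hz⟩
      obtain ⟨q, rfl⟩ := Quot.exists_rep zc
      rw [tau_mk] at hz
      set S := supp p.2 with hSdef
      have hS : S.Nonempty := supp_nonempty _
      set w : W.obj (op (fobj S)) := W.map (fhom S hS).op p.1 with hwdef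
      have hcfeq : cfun hN ⟨m, p.1, p.2⟩ = cfun hN (embp n q) :=
        ((mk_eq_iff_cfun hN _ _).1 hz).symm
      have hsk : w ∈ SkSet W n (op (fobj S)) := by
        apply (mem_skSet_iff hN n _).2
        have h1 : (cfun hN (⟨m, p.1, p.2⟩ : GeomRealPre W)).1 = sdeg hN w := rfl
        rw [← h1, hcfeq]
        exact cfun_dim_le_n hN n q
      refine ⟨S, hS, subset_refl _, ?_⟩
      rw [mem_DC]
      refine ⟨hsk, ?_⟩
      have htau : GeomReal.map (skInclusion W n)
          (Quot.mk _ (⟨fobj S, (⟨w, hsk⟩ : ↥(SkSet W n (op (fobj S)))),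
            restr S hS p.2 (subset_refl _)⟩ : GeomRealPre (Sk W n)))
          = GeomReal.map (skInclusion W n) (Quot.mk _ q) := by
        erw [tau_mk, tau_mk, hz]
        apply Quot.sound
        exact rel_cmid ⟨m, p.1, p.2⟩
      have := tau_inj hN n htau
      rw [this]
      exact hzC
    · rintro ⟨S, hS, h, hD⟩
      rw [mem_DC] at hD
      obtain ⟨hsk, hQ⟩ := hD
      refine ⟨_, hQ, ?_⟩
      erw [tau_mk]
      apply Quot.sound
      exact ⟨fhom S hS, rfl, (toTopMap_fhom_restr S hS p.2 h).symm⟩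
  refine (congrArg IsClosed hkey).mpr ?_
  exact isClosed_UF (fun j => isClosed_DC hN n hC j) m

/-- the level sets cut out by closedness data for the skeleton-avoiding argument -/
def DZ (hN : IsSplitting W N) (d : ℕ) (T : Set (Σ j : SimplexCategory, j.toTopObj))
    (j : SimplexCategory) : Set ((W.obj (op j) : Type) × j.toTopObj) :=
  {p | d < (sdeg hN p.1).len ∧
    (⟨sdeg hN p.1, SimplexCategory.toTopMap (sepi hN p.1) p.2⟩
      : Σ j' : SimplexCategory, j'.toTopObj) ∈ T}

lemma isClosed_DZ (hN : IsSplitting W N) (d : ℕ) {T : Set (Σ j : SimplexCategory, j.toTopObj)}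
    (hT : IsClosed T) (j : SimplexCategory) : IsClosed (DZ hN d T j) := by
  have hT' : IsClosed (setOf fun q : Σ j' : SimplexCategory, j'.toTopObj => d < q.1.len ∧ q ∈ T) := by
    have hsplit : (setOf fun q : Σ j' : SimplexCategory, j'.toTopObj => d < q.1.len ∧ q ∈ T)
        = (setOf fun q : Σ j' : SimplexCategory, j'.toTopObj => d < q.1.len) ∩ T := rfl
    rw [hsplit]
    refine IsClosed.inter ?_ hT
    rw [isClosed_sigma_iff]
    intro j'
    have hfib : Sigma.mk j' ⁻¹' (setOf fun q : Σ j'' : SimplexCategory, j''.toTopObj => d < q.1.len)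
        = (setOf fun y : j'.toTopObj => d < j'.len) := rfl
    rw [hfib]
    by_cases h : d < j'.len
    · have he : (setOf fun y : j'.toTopObj => d < j'.len) = Set.univ := Set.eq_univ_of_forall fun y => h
      rw [he]; exact isClosed_univ
    · have he : (setOf fun y : j'.toTopObj => d < j'.len) = ∅ := Set.eq_empty_of_forall_notMem fun y hy => h hy
      rw [he]; exact isClosed_empty
  have hΦ : Continuous (fun p : (W.obj (op j) : Type) × j.toTopObj =>
      (⟨sdeg hN p.1, SimplexCategory.toTopMap (sepi hN p.1) p.2⟩
        : Σ j' : SimplexCategory, j'.toTopObj)) := by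
    have h3 : Continuous (fun q : Σ pp : SurjFrom (op j), (↥(N pp.1) × j.toTopObj) =>
        (⟨q.1.1, SimplexCategory.toTopMap q.1.2.1 q.2.2⟩
          : Σ j' : SimplexCategory, j'.toTopObj)) := by
      apply continuous_sigma
      intro pp
      show Continuous fun a : ↥(N pp.1) × j.toTopObj =>
        (⟨pp.1, SimplexCategory.toTopMap pp.2.1 a.2⟩ : Σ j' : SimplexCategory, j'.toTopObj)
      exact continuous_sigmaMk.comp ((continuous_toTopMap' _).comp continuous_snd)
    have h1 : Continuous (fun p : (W.obj (op j) : Type) × j.toTopObj =>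
        ((splitData hN p.1, p.2) : (Σ pp : SurjFrom (op j), ↥(N pp.1)) × j.toTopObj)) := by
      refine Continuous.prodMk ?_ continuous_snd
      exact (((hN (op j)).homeomorph _).symm.continuous).comp continuous_fst
    have h2 : Continuous (⇑(Homeomorph.sigmaProdDistrib
        (X := fun pp : SurjFrom (op j) => ↥(N pp.1)) (Y := j.toTopObj))) :=
      Homeomorph.continuous _
    have hcomp := h3.comp (h2.comp h1)
    convert hcomp using 1
    funext p
    rfl
  exact hT'.preimage hΦ

lemma isClosed_Zset (hN : IsSplitting W N) (d : ℕ)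
    {T : Set (Σ j : SimplexCategory, j.toTopObj)}
    (hT : IsClosed T) (hTpos : ∀ q ∈ T, AllPos q.2) :
    IsClosed (setOf fun z : GeomReal W => d < (canon hN z).1.len ∧
      (⟨(canon hN z).1, (canon hN z).2.2⟩ : Σ j : SimplexCategory, j.toTopObj) ∈ T) := by
  refine (isQuotientMap_quot_mk (r := GeomRealRel W)).isClosed_preimage.1 ?_
  refine isClosed_sigma_iff.2 ?_
  intro m
  have hkey : Sigma.mk m ⁻¹' (Quot.mk (GeomRealRel W) ⁻¹'
      (setOf fun z : GeomReal W => d < (canon hN z).1.len ∧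
        (⟨(canon hN z).1, (canon hN z).2.2⟩ : Σ j : SimplexCategory, j.toTopObj) ∈ T))
      = UF W (DZ hN d T) m := by
    ext p
    simp only [Set.mem_preimage, Set.mem_setOf_eq]
    rw [mem_UF_iff]
    constructor
    · intro hcond
      refine ⟨supp p.2, supp_nonempty _, subset_refl _, ?_⟩
      exact hcond
    · rintro ⟨S, hS, h, hD⟩
      show d < (cfun hN ⟨m, p.1, p.2⟩).1.len ∧
        (⟨(cfun hN ⟨m, p.1, p.2⟩).1, (cfun hN ⟨m, p.1, p.2⟩).2.2⟩
          : Σ j' : SimplexCategory, j'.toTopObj) ∈ T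
      obtain ⟨hd, hmem⟩ := hD
      set w : W.obj (op (fobj S)) := W.map (fhom S hS).op p.1 with hwdef
      set u' := SimplexCategory.toTopMap (sepi hN w) (restr S hS p.2 h) with hu'
      have hpos : AllPos u' := hTpos _ hmem
      have hc1 : cfun hN ⟨m, p.1, p.2⟩ = cfun hN ⟨fobj S, w, restr S hS p.2 h⟩ :=
        (cfun_rel hN ⟨fhom S hS, rfl, (toTopMap_fhom_restr S hS p.2 h).symm⟩).symm
      have hc2 : cfun hN (⟨fobj S, w, restr S hS p.2 h⟩ : GeomRealPre W)
          = cfun hN (sstep hN ⟨fobj S, w, restr S hS p.2 h⟩) :=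
        cfun_rel hN (rel_sstep hN _)
      have hc3 : cfun hN (sstep hN (⟨fobj S, w, restr S hS p.2 h⟩ : GeomRealPre W))
          = sstep hN (sstep hN (⟨fobj S, w, restr S hS p.2 h⟩ : GeomRealPre W)) := by
        apply cfun_of_allPos hN
        exact hpos
      have hc4 : sstep hN (sstep hN (⟨fobj S, w, restr S hS p.2 h⟩ : GeomRealPre W))
          = sstep hN (⟨fobj S, w, restr S hS p.2 h⟩ : GeomRealPre W) :=
        sstep_of_mem hN (selt_mem hN w) _
      have hall : cfun hN ⟨m, p.1, p.2⟩
          = (⟨sdeg hN w, selt hN w, u'⟩ : GeomRealPre W) := by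
        rw [hc1, hc2, hc3, hc4]
        rfl
      rw [hall]
      exact ⟨hd, hmem⟩
  refine (congrArg IsClosed hkey).mpr ?_
  exact isClosed_UF (fun j => isClosed_DZ hN d hT j) m

lemma isClosed_sigmaMk_preimage_singleton (j : SimplexCategory)
    (c : Σ j' : SimplexCategory, j'.toTopObj) :
    IsClosed (Sigma.mk j ⁻¹' ({c} : Set (Σ j' : SimplexCategory, j'.toTopObj))) := by
  obtain ⟨j0, u⟩ := c
  by_cases h : j0 = j
  · subst h
    have heq : Sigma.mk j0 ⁻¹' ({⟨j0, u⟩} : Set (Σ j' : SimplexCategory, j'.toTopObj))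
        = {u} := by
      ext y
      simp only [Set.mem_preimage, Set.mem_singleton_iff]
      constructor
      · intro hy
        exact eq_of_heq (Sigma.mk.inj_iff.1 hy).2
      · rintro rfl
        rfl
    rw [heq]
    exact isClosed_singleton
  · have heq : Sigma.mk j ⁻¹' ({⟨j0, u⟩} : Set (Σ j' : SimplexCategory, j'.toTopObj))
        = ∅ := by
      ext y
      simp only [Set.mem_preimage, Set.mem_singleton_iff, Set.mem_empty_iff_false, iff_false]
      intro hy
      exact h (congrArg Sigma.fst hy).symm
    rw [heq]
    exact isClosed_empty

end Main


end CFS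

/-- If `W` is a split simplicial space and `K` is a compact space, then every continuous
map `K → |W|` factors through the realization `|Skₙ W|` of a skeleton. -/
theorem compact_factors_through_skeleton
    (W : SimplicialObject TopCat.{0})
    (hW : ∃ N : ∀ n : SimplexCategory, Set (W.obj (op n)), IsSplitting W N)
    {K : Type} [TopologicalSpace K] [CompactSpace K] (f : C(K, GeomReal W)) :
    ∃ (n : ℕ) (g : C(K, GeomReal (Sk W n))),
      (GeomReal.map (skInclusion W n)).comp g = f := by
  classical
  obtain ⟨N, hN⟩ := hW
  -- Step A: the canonical dimension is bounded on the image of `f`.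
  have hbound : ∃ nn : ℕ, ∀ a : K, (CFS.canon hN (f a)).1.len ≤ nn := by
    by_contra hcon
    push_neg at hcon
    set T : Set (Σ j : SimplexCategory, j.toTopObj) :=
      ⋃ (j : SimplexCategory), if h : ∃ a : K, (CFS.canon hN (f a)).1 = j then
        {(⟨(CFS.canon hN (f h.choose)).1, (CFS.canon hN (f h.choose)).2.2⟩
          : Σ j' : SimplexCategory, j'.toTopObj)}
      else ∅ with hT
    have hTpos : ∀ q ∈ T, CFS.AllPos q.2 := by
      intro q hq
      simp only [hT, Set.mem_iUnion] at hq
      obtain ⟨j, hj⟩ := hq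
      split_ifs at hj with h
      · rw [Set.mem_singleton_iff] at hj
        rw [hj]
        exact CFS.canon_allPos hN _
      · exact absurd hj (Set.notMem_empty q)
    have hTclosed : IsClosed T := by
      rw [isClosed_sigma_iff]
      intro j
      by_cases h : ∃ a : K, (CFS.canon hN (f a)).1 = j
      · have heq : Sigma.mk j ⁻¹' T = Sigma.mk j ⁻¹'
            {(⟨(CFS.canon hN (f h.choose)).1, (CFS.canon hN (f h.choose)).2.2⟩
              : Σ j' : SimplexCategory, j'.toTopObj)} := by
          ext y
          simp only [Set.mem_preimage, hT, Set.mem_iUnion]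
          constructor
          · rintro ⟨j', hj'⟩
            split_ifs at hj' with h'
            · rw [Set.mem_singleton_iff] at hj'
              have hfst : j = (CFS.canon hN (f h'.choose)).1 := congrArg Sigma.fst hj'
              have hj'j : j' = j := by rw [hfst, h'.choose_spec]
              subst hj'j
              exact hj'
            · exact absurd hj' (Set.notMem_empty _)
          · intro hy
            exact ⟨j, by rw [dif_pos h]; exact hy⟩
        rw [heq]
        exact CFS.isClosed_sigmaMk_preimage_singleton j _
      · have heq : Sigma.mk j ⁻¹' T = ∅ := by
          ext y
          simp only [Set.mem_preimage, hT, Set.mem_iUnion, Set.mem_empty_iff_false, iff_false,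
            not_exists]
          intro j' hj'
          split_ifs at hj' with h'
          · rw [Set.mem_singleton_iff] at hj'
            have hfst : j = (CFS.canon hN (f h'.choose)).1 := congrArg Sigma.fst hj'
            have hj'j : j' = j := by rw [hfst, h'.choose_spec]
            subst hj'j
            exact h ⟨h'.choose, hfst.symm⟩
          · exact Set.notMem_empty _ hj'
        rw [heq]
        exact isClosed_empty
    set ZS : ℕ → Set (GeomReal W) := fun i =>
      (setOf fun z : GeomReal W => i < (CFS.canon hN z).1.len ∧
        (⟨(CFS.canon hN z).1, (CFS.canon hN z).2.2⟩ : Σ j : SimplexCategory, j.toTopObj) ∈ T)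
      with hZS
    have hZSclosed : ∀ i, IsClosed (ZS i) := fun i => CFS.isClosed_Zset hN i hTclosed hTpos
    set U : ℕ → Set K := fun i => f ⁻¹' (ZS i)ᶜ with hU
    have hUopen : ∀ i, IsOpen (U i) := fun i => ((hZSclosed i).isOpen_compl).preimage f.continuous
    have hUcover : (Set.univ : Set K) ⊆ ⋃ i, U i := by
      intro a _
      rw [Set.mem_iUnion]
      refine ⟨(CFS.canon hN (f a)).1.len, ?_⟩
      intro hmem
      exact absurd hmem.1 (lt_irrefl _)
    obtain ⟨F, hF⟩ := IsCompact.elim_finite_subcover isCompact_univ U hUopen hUcover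
    set M := F.sup id with hM
    obtain ⟨a, ha⟩ := hcon M
    have hjex : ∃ a' : K, (CFS.canon hN (f a')).1 = (CFS.canon hN (f a)).1 := ⟨a, rfl⟩
    have ha0spec : (CFS.canon hN (f hjex.choose)).1 = (CFS.canon hN (f a)).1 := hjex.choose_spec
    have hmemT : (⟨(CFS.canon hN (f hjex.choose)).1, (CFS.canon hN (f hjex.choose)).2.2⟩
        : Σ j : SimplexCategory, j.toTopObj) ∈ T := by
      simp only [hT, Set.mem_iUnion]
      exact ⟨(CFS.canon hN (f a)).1, by rw [dif_pos hjex]; exact rfl⟩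
    have hdim : M < (CFS.canon hN (f hjex.choose)).1.len := by
      rw [ha0spec]
      exact ha
    have hmem : hjex.choose ∈ ⋃ i ∈ F, U i := hF (Set.mem_univ _)
    rw [Set.mem_iUnion₂] at hmem
    obtain ⟨i, hiF, hi⟩ := hmem
    apply hi
    constructor
    · exact lt_of_le_of_lt (le_trans (Finset.le_sup (f := id) hiF) (le_refl M)) hdim
    · exact hmemT
  obtain ⟨n, hn⟩ := hbound
  -- Step B: lift through the closed embedding of the skeleton realization.
  have hrange : ∀ a : K, f a ∈ Set.range
      (GeomReal.map (skInclusion W n) : GeomReal (Sk W n) → GeomReal W) :=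
    fun a => (CFS.mem_range_tau_iff hN n (f a)).2 (hn a)
  have hg0 : ∀ a, GeomReal.map (skInclusion W n) ((hrange a).choose) = f a :=
    fun a => (hrange a).choose_spec
  have hg0cont : Continuous (fun a => (hrange a).choose) := by
    rw [continuous_iff_isClosed]
    intro C hC
    have hpre : (fun a => (hrange a).choose) ⁻¹' C
        = f ⁻¹' ((GeomReal.map (skInclusion W n) : GeomReal (Sk W n) → GeomReal W) '' C) := by
      ext a
      simp only [Set.mem_preimage, Set.mem_image]
      constructor
      · intro hgC
        exact ⟨(hrange a).choose, hgC, hg0 a⟩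
      · rintro ⟨c, hcC, hc⟩
        have hco : (hrange a).choose = c := CFS.tau_inj hN n (by rw [hg0 a, hc])
        rw [hco]
        exact hcC
    rw [hpre]
    exact (CFS.isClosed_image_tau hN n hC).preimage f.continuous
  exact ⟨n, ⟨fun a => (hrange a).choose, hg0cont⟩, ContinuousMap.ext fun a => hg0 a⟩



end
end
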